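/- arXiv:1901.09176 — 3 statements merged into one kernel-verified Lean document; each statement's English description precedes it below -/
import Mathlib

section
/- Assume β̃ > 0 and let σ be a real m×m matrix. Then for every p > 1 there exist δ ∈ (0,1], a positive constant C̃₀', and a compact set K' ⊂ ℝ^m such that ℒ^u 𝒱_{p,δ}(x) ≤ C̃₀' 1_{K'}(x) - p δ (3β̃/(4m)) 𝒱_{p-1,δ}(x) for all x ∈ ℝ^m and all u ∈ Δ, where ℒ^u f(x) = (1/2) trace(σσᵀ ∇²f(x)) + ⟨b̃(x,u), ∇f(x)⟩. -/
open scoped BigOperators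
open MeasureTheory

noncomputable section

def psi (t : ℝ) : ℝ :=
  if t ≤ -1 then -(1/2)
  else if t ≤ 0 then (t+1)^3 - (1/2)*(t+1)^4 - 1/2
  else t

def psi' (t : ℝ) : ℝ :=
  if t ≤ -1 then 0
  else if t ≤ 0 then 3*(t+1)^2 - 2*(t+1)^3
  else 1

def psi'' (t : ℝ) : ℝ :=
  if t ≤ -1 then 0
  else if t ≤ 0 then 6*(t+1) - 6*(t+1)^2
  else 0

lemma hasDerivAt_congr_on {f g : ℝ → ℝ} {s : Set ℝ} {x d : ℝ} (hs : s ∈ nhds x)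
    (hfg : ∀ y ∈ s, f y = g y) (hg : HasDerivAt g d x) : HasDerivAt f d x := by
  apply hg.congr_of_eventuallyEq
  filter_upwards [hs] with y hy using hfg y hy

lemma hasDerivAt_union {f : ℝ → ℝ} {a d : ℝ} {s t : Set ℝ}
    (hst : s ∪ t ∈ nhds a) (hs : HasDerivWithinAt f d s a)
    (ht : HasDerivWithinAt f d t a) : HasDerivAt f d a :=
  (hs.union ht).hasDerivAt hst

/-- the middle polynomial -/
def q0 (t : ℝ) : ℝ := (t+1)^3 - (1/2)*(t+1)^4 - 1/2

lemma hasDerivAt_q0 (t : ℝ) : HasDerivAt q0 (3*(t+1)^2 - 2*(t+1)^3) t := by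
  have h1 : HasDerivAt (fun t : ℝ => t + 1) 1 t := (hasDerivAt_id t).add_const 1
  have h3 : HasDerivAt (fun t : ℝ => (t+1)^3) (3*(t+1)^2) t := by
    simpa using (h1.fun_pow 3)
  have h4 : HasDerivAt (fun t : ℝ => (t+1)^4) (4*(t+1)^3) t := by
    simpa using (h1.fun_pow 4)
  have := (h3.sub ((h4.const_mul (1/2:ℝ)))).sub_const (1/2)
  exact this.congr_deriv (by ring)

lemma q0_eq_psi_on : ∀ y ∈ Set.Icc (-1:ℝ) 0, psi y = q0 y := by
  intro y hy
  rcases eq_or_lt_of_le hy.1 with h | h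
  · norm_num [psi, q0, ← h]
  · simp [psi, q0, not_le.mpr h, hy.2]

lemma r0_eq_psi'_on : ∀ y ∈ Set.Icc (-1:ℝ) 0, psi' y = 3*(y+1)^2 - 2*(y+1)^3 := by
  intro y hy
  rcases eq_or_lt_of_le hy.1 with h | h
  · norm_num [psi', ← h]
  · simp [psi', not_le.mpr h, hy.2]

lemma hasDerivAt_psi (t : ℝ) : HasDerivAt psi (psi' t) t := by
  rcases lt_trichotomy t (-1) with h | h | h
  · apply hasDerivAt_congr_on (g := fun _ => -(1/2:ℝ)) (s := Set.Iio (-1:ℝ))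
      (isOpen_Iio.mem_nhds h)
      (fun y hy => by rw [psi, if_pos (le_of_lt hy)])
    · simpa [psi', h.le] using (hasDerivAt_const t (-(1/2:ℝ)))
  · subst h
    have hd : psi' (-1 : ℝ) = 0 := by simp [psi']
    rw [hd]
    apply hasDerivAt_union (s := Set.Iic (-1:ℝ)) (t := Set.Icc (-1:ℝ) 0)
    · rw [Set.Iic_union_Icc_eq_Iic (by norm_num)]
      exact Iic_mem_nhds (by norm_num)
    · exact (hasDerivWithinAt_const _ _ (-(1/2:ℝ))).congr
        (fun y hy => by rw [psi, if_pos (Set.mem_Iic.mp hy)]) (by rw [psi, if_pos le_rfl])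
    · have := (hasDerivAt_q0 (-1)).hasDerivWithinAt (s := Set.Icc (-1:ℝ) 0)
      have h0 : (3*((-1:ℝ)+1)^2 - 2*((-1:ℝ)+1)^3) = 0 := by norm_num
      rw [h0] at this
      exact this.congr q0_eq_psi_on (by norm_num [psi, q0])
  · rcases lt_trichotomy t 0 with h2 | h2 | h2
    · apply hasDerivAt_congr_on (g := q0) (s := Set.Ioo (-1:ℝ) 0)
        (isOpen_Ioo.mem_nhds ⟨h, h2⟩)
        (fun y hy => q0_eq_psi_on y ⟨hy.1.le, hy.2.le⟩)
      have := hasDerivAt_q0 t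
      rw [show psi' t = 3*(t+1)^2 - 2*(t+1)^3 from r0_eq_psi'_on t ⟨h.le, h2.le⟩]
      exact this
    · subst h2
      have hd : psi' (0 : ℝ) = 1 := by norm_num [psi']
      rw [hd]
      apply hasDerivAt_union (s := Set.Icc (-1:ℝ) 0) (t := Set.Ici (0:ℝ))
      · rw [Set.Icc_union_Ici_eq_Ici (by norm_num)]
        exact Ici_mem_nhds (by norm_num)
      · have := (hasDerivAt_q0 0).hasDerivWithinAt (s := Set.Icc (-1:ℝ) 0)
        have h0 : (3*((0:ℝ)+1)^2 - 2*((0:ℝ)+1)^3) = 1 := by norm_num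
        rw [h0] at this
        exact this.congr q0_eq_psi_on (by norm_num [psi, q0])
      · exact (hasDerivWithinAt_id 0 _).congr
          (fun y hy => by
            rcases eq_or_lt_of_le (Set.mem_Ici.mp hy : (0:ℝ) ≤ y) with h3 | h3
            · simp [psi, ← h3]; norm_num
            · simp [psi, not_le.mpr h3, not_le.mpr (by linarith : (-1:ℝ) < y)])
          (by norm_num [psi])
    · apply hasDerivAt_congr_on (g := id) (s := Set.Ioi (0:ℝ))
        (isOpen_Ioi.mem_nhds h2)
        (fun y hy => by
          simp only [psi, id]
          rw [if_neg (by simp at hy; linarith), if_neg (by simp at hy; linarith)])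
      simpa [psi', not_le.mpr h2, not_le.mpr (by linarith : (-1:ℝ) < t)] using (hasDerivAt_id t)


/-- `Ψ(x) = ∑ i, ψ(x_i)/μ_i`. -/
def Psi (m : ℕ) (μ : Fin m → ℝ) (x : Fin m → ℝ) : ℝ := ∑ i, psi (x i) / μ i

/-- `Ψ_δ(x) = ∑ i, ψ(δ x_i)/μ_i`. -/
def Psid (m : ℕ) (μ : Fin m → ℝ) (δ : ℝ) (x : Fin m → ℝ) : ℝ :=
  ∑ i, psi (δ * x i) / μ i

/-- The scaled Lyapunov function
`𝒱_{p,δ}(x) = (δ² Ψ(-x) + Ψ_δ(x) + m / min_i μ_i)^p`. -/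
def Vpd (m : ℕ) (μ : Fin m → ℝ) (δ p : ℝ) (x : Fin m → ℝ) : ℝ :=
  (δ ^ 2 * Psi m μ (-x) + Psid m μ δ x + (m : ℝ) / ⨅ i, μ i) ^ p

/-- The drift `b̃(x,u) = -(β̃/m) M e - M (x - ⟨e,x⟩⁺ u) - ⟨e,x⟩⁺ Γ u`, written
componentwise, where `M = diag(μ)` and `Γ = diag(γ)`. -/
def drift (m : ℕ) (μ γ : Fin m → ℝ) (β : ℝ) (x u : Fin m → ℝ) : Fin m → ℝ :=
  fun i => -(β / (m : ℝ)) * μ i - μ i * (x i - max (∑ j, x j) 0 * u i)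
    - max (∑ j, x j) 0 * (γ i * u i)

/-- `trace(A ∇²f(x)) = ∑ i j, A_{ij} ∂_i ∂_j f(x)`. -/
def traceHess (m : ℕ) (A : Matrix (Fin m) (Fin m) ℝ) (f : (Fin m → ℝ) → ℝ)
    (x : Fin m → ℝ) : ℝ :=
  ∑ i, ∑ j, A i j *
    fderiv ℝ (fun y => fderiv ℝ f y (Pi.single i (1 : ℝ))) x (Pi.single j (1 : ℝ))


lemma r0' (t : ℝ) : HasDerivAt (fun y : ℝ => 3*(y+1)^2 - 2*(y+1)^3) (6*(t+1) - 6*(t+1)^2) t := by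
  have h1 : HasDerivAt (fun t : ℝ => t + 1) 1 t := (hasDerivAt_id t).add_const 1
  have h2 : HasDerivAt (fun t : ℝ => (t+1)^2) (2*(t+1)) t := by simpa using (h1.fun_pow 2)
  have h3 : HasDerivAt (fun t : ℝ => (t+1)^3) (3*(t+1)^2) t := by simpa using (h1.fun_pow 3)
  have := (h2.const_mul (3:ℝ)).sub (h3.const_mul (2:ℝ))
  exact this.congr_deriv (by ring)

lemma hasDerivAt_psi' (t : ℝ) : HasDerivAt psi' (psi'' t) t := by
  rcases lt_trichotomy t (-1) with h | h | h
  · apply hasDerivAt_congr_on (g := fun _ => (0:ℝ)) (s := Set.Iio (-1:ℝ))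
      (isOpen_Iio.mem_nhds h)
      (fun y hy => by rw [psi', if_pos (le_of_lt hy)])
    simpa [psi'', h.le] using (hasDerivAt_const t (0:ℝ))
  · subst h
    have hd : psi'' (-1 : ℝ) = 0 := by simp [psi'']
    rw [hd]
    apply hasDerivAt_union (s := Set.Iic (-1:ℝ)) (t := Set.Icc (-1:ℝ) 0)
    · rw [Set.Iic_union_Icc_eq_Iic (by norm_num)]
      exact Iic_mem_nhds (by norm_num)
    · exact (hasDerivWithinAt_const _ _ (0:ℝ)).congr
        (fun y hy => by rw [psi', if_pos (Set.mem_Iic.mp hy)]) (by rw [psi', if_pos le_rfl])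
    · have := (r0' (-1)).hasDerivWithinAt (s := Set.Icc (-1:ℝ) 0)
      have h0 : (6*((-1:ℝ)+1) - 6*((-1:ℝ)+1)^2) = 0 := by norm_num
      rw [h0] at this
      exact this.congr r0_eq_psi'_on (by norm_num [psi'])
  · rcases lt_trichotomy t 0 with h2 | h2 | h2
    · apply hasDerivAt_congr_on (g := fun y : ℝ => 3*(y+1)^2 - 2*(y+1)^3) (s := Set.Ioo (-1:ℝ) 0)
        (isOpen_Ioo.mem_nhds ⟨h, h2⟩)
        (fun y hy => r0_eq_psi'_on y ⟨hy.1.le, hy.2.le⟩)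
      rw [show psi'' t = 6*(t+1) - 6*(t+1)^2 by
        simp only [psi'', if_neg (not_le.mpr h), if_pos h2.le]]
      exact r0' t
    · subst h2
      have hd : psi'' (0 : ℝ) = 0 := by norm_num [psi'']
      rw [hd]
      apply hasDerivAt_union (s := Set.Icc (-1:ℝ) 0) (t := Set.Ici (0:ℝ))
      · rw [Set.Icc_union_Ici_eq_Ici (by norm_num)]
        exact Ici_mem_nhds (by norm_num)
      · have := (r0' 0).hasDerivWithinAt (s := Set.Icc (-1:ℝ) 0)
        have h0 : (6*((0:ℝ)+1) - 6*((0:ℝ)+1)^2) = 0 := by norm_num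
        rw [h0] at this
        exact this.congr r0_eq_psi'_on (by norm_num [psi'])
      · exact (hasDerivWithinAt_const _ _ (1:ℝ)).congr
          (fun y hy => by
            rcases eq_or_lt_of_le (Set.mem_Ici.mp hy : (0:ℝ) ≤ y) with h3 | h3
            · norm_num [psi', ← h3]
            · simp [psi', not_le.mpr h3, not_le.mpr (by linarith : (-1:ℝ) < y)])
          (by norm_num [psi'])
    · apply hasDerivAt_congr_on (g := fun _ => (1:ℝ)) (s := Set.Ioi (0:ℝ))
        (isOpen_Ioi.mem_nhds h2)
        (fun y hy => by
          simp [psi', not_le.mpr (Set.mem_Ioi.mp hy), not_le.mpr (by have := Set.mem_Ioi.mp hy; linarith : (-1:ℝ) < y)])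
      simpa [psi'', not_le.mpr h2, not_le.mpr (by linarith : (-1:ℝ) < t)] using (hasDerivAt_const t (1:ℝ))

lemma psi'_nonneg (t : ℝ) : 0 ≤ psi' t := by
  unfold psi'
  split_ifs with h1 h2
  · exact le_refl 0
  · nlinarith [sq_nonneg (t+1), mul_nonneg (sq_nonneg (t+1)) (by linarith : (0:ℝ) ≤ 1 - 2*t)]
  · norm_num

lemma psi'_le_one (t : ℝ) : psi' t ≤ 1 := by
  unfold psi'
  split_ifs with h1 h2
  · norm_num
  · nlinarith [sq_nonneg (t+1), sq_nonneg t, mul_nonneg (sq_nonneg t) (by linarith : (0:ℝ) ≤ 2*(t+1)+1)]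
  · exact le_refl 1

lemma psi'_of_nonneg {t : ℝ} (h : 0 ≤ t) : psi' t = 1 := by
  unfold psi'
  rcases eq_or_lt_of_le h with h2 | h2
  · rw [if_neg (by linarith), if_pos (by linarith)]; norm_num [← h2]
  · rw [if_neg (by linarith), if_neg (by linarith)]

lemma psi'_of_le {t : ℝ} (h : t ≤ -1) : psi' t = 0 := if_pos h

lemma psi''_nonneg (t : ℝ) : 0 ≤ psi'' t := by
  unfold psi''
  split_ifs with h1 h2
  · exact le_refl 0
  · nlinarith [mul_nonneg (by linarith : (0:ℝ) ≤ t+1) (by linarith : (0:ℝ) ≤ -t)]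
  · exact le_refl 0

lemma psi''_le (t : ℝ) : psi'' t ≤ 3/2 := by
  unfold psi''
  split_ifs with h1 h2
  · norm_num
  · nlinarith [sq_nonneg (2*t+1)]
  · norm_num

lemma psi_lb (t : ℝ) : -(1/2) ≤ psi t := by
  unfold psi
  split_ifs with h1 h2
  · exact le_refl _
  · nlinarith [pow_nonneg (by linarith : (0:ℝ) ≤ t+1) 3, pow_nonneg (by linarith : (0:ℝ) ≤ t+1) 4,
      mul_nonneg (mul_nonneg (by linarith : (0:ℝ) ≤ t+1) (by linarith : (0:ℝ) ≤ t+1)) (by linarith : (0:ℝ) ≤ t+1)]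
  · linarith [not_le.mp h2]

lemma psi_ub (t : ℝ) : psi t ≤ 1 + |t| := by
  unfold psi
  have ha : (0:ℝ) ≤ |t| := abs_nonneg t
  split_ifs with h1 h2
  · linarith
  · have h3 : (t+1)^3 ≤ 1 := by nlinarith [sq_nonneg (t+1)]
    nlinarith [pow_nonneg (by linarith : (0:ℝ) ≤ t+1) 4]
  · have := le_abs_self t; linarith

/-- key: s ψ'(-s) ≤ 4/9 for s ≥ 0 -/
lemma key49 {s : ℝ} (hs : 0 ≤ s) : s * psi' (-s) ≤ 4/9 := by
  unfold psi'
  split_ifs with h1 h2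
  · norm_num
  · -- -1 < -s ≤ 0, i.e. 0 ≤ s < 1
    have hs1 : s < 1 := by linarith [not_le.mp h1]
    have key : 0 ≤ (1 - 3*s)^2 * (4 - 3*s) := mul_nonneg (sq_nonneg _) (by linarith)
    nlinarith [mul_nonneg (mul_nonneg hs (by linarith : (0:ℝ) ≤ 1-s))
        (mul_nonneg (by linarith : (0:ℝ) ≤ 1-s) (by linarith : (0:ℝ) ≤ 1-s))]
  · linarith [not_le.mp h2]

/-- key: t ψ'(-t) ≤ 1 for t ≥ 0 -/
lemma key1 {t : ℝ} (ht : 0 ≤ t) : t * psi' (-t) ≤ 1 := by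
  rcases le_or_gt 1 t with h | h
  · rw [psi'_of_le (by linarith)]; norm_num
  · have h1 : t * psi' (-t) ≤ t * 1 := mul_le_mul_of_nonneg_left (psi'_le_one _) ht
    linarith

def gd (δ t : ℝ) : ℝ := δ * psi' (δ*t) - δ^2 * psi' (-t)

def gd2 (δ t : ℝ) : ℝ := δ^2 * psi'' (δ*t) + δ^2 * psi'' (-t)

def Fb (m : ℕ) (μ : Fin m → ℝ) (δ : ℝ) (x : Fin m → ℝ) : ℝ :=
  δ ^ 2 * Psi m μ (-x) + Psid m μ δ x + (m : ℝ) / ⨅ i, μ i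

lemma Vpd_eq (m : ℕ) (μ : Fin m → ℝ) (δ q : ℝ) (x : Fin m → ℝ) :
    Vpd m μ δ q x = Fb m μ δ x ^ q := rfl

lemma hasDerivAt_gd (δ t : ℝ) : HasDerivAt (gd δ) (gd2 δ t) t := by
  have h0 : HasDerivAt (fun y : ℝ => δ * y) δ t := by
    simpa using (hasDerivAt_id t).const_mul δ
  have h1 : HasDerivAt (fun t : ℝ => psi' (δ*t)) (psi'' (δ*t) * δ) t :=
    (hasDerivAt_psi' (δ*t)).comp t h0
  have h2 : HasDerivAt (fun t : ℝ => psi' (-t)) (psi'' (-t) * (-1)) t :=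
    (hasDerivAt_psi' (-t)).comp t (hasDerivAt_neg t)
  have := (h1.const_mul δ).sub (h2.const_mul (δ^2))
  exact this.congr_deriv (by unfold gd2; ring)

/-- the summand in `Fb` -/
def fbi (δ μi t : ℝ) : ℝ := (δ^2 * psi (-t) + psi (δ * t)) / μi

lemma hasDerivAt_fbi (δ μi t : ℝ) : HasDerivAt (fbi δ μi) (gd δ t / μi) t := by
  have h0 : HasDerivAt (fun y : ℝ => δ * y) δ t := by
    simpa using (hasDerivAt_id t).const_mul δ
  have h1 : HasDerivAt (fun t : ℝ => psi (δ*t)) (psi' (δ*t) * δ) t :=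
    (hasDerivAt_psi (δ*t)).comp t h0
  have h2 : HasDerivAt (fun t : ℝ => psi (-t)) (psi' (-t) * (-1)) t :=
    (hasDerivAt_psi (-t)).comp t (hasDerivAt_neg t)
  have := ((h2.const_mul (δ^2)).add h1).div_const μi
  exact this.congr_deriv (by unfold gd; ring)

lemma Fb_eq_sum (m : ℕ) (μ : Fin m → ℝ) (δ : ℝ) (x : Fin m → ℝ) :
    Fb m μ δ x = (∑ i, fbi δ (μ i) (x i)) + (m : ℝ) / ⨅ i, μ i := by
  unfold Fb Psi Psid fbi
  rw [Finset.mul_sum, ← Finset.sum_add_distrib]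
  congr 1
  refine Finset.sum_congr rfl fun i _ => ?_
  simp only [Pi.neg_apply]
  ring

def LF (m : ℕ) (μ : Fin m → ℝ) (δ : ℝ) (x : Fin m → ℝ) : (Fin m → ℝ) →L[ℝ] ℝ :=
  ∑ i, (gd δ (x i) / μ i) • (ContinuousLinearMap.proj i)

lemma LF_apply (m : ℕ) (μ : Fin m → ℝ) (δ : ℝ) (x v : Fin m → ℝ) :
    LF m μ δ x v = ∑ i, gd δ (x i) / μ i * v i := by
  simp [LF, ContinuousLinearMap.sum_apply, ContinuousLinearMap.proj_apply, smul_eq_mul]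

lemma LF_single (m : ℕ) (μ : Fin m → ℝ) (δ : ℝ) (x : Fin m → ℝ) (j : Fin m) :
    LF m μ δ x (Pi.single j 1) = gd δ (x j) / μ j := by
  rw [LF_apply]
  rw [Finset.sum_eq_single j]
  · simp
  · intro i _ hij
    simp [Pi.single_apply, hij]
  · intro h; exact absurd (Finset.mem_univ j) h

lemma hasFDerivAt_Fb (m : ℕ) (μ : Fin m → ℝ) (δ : ℝ) (x : Fin m → ℝ) :
    HasFDerivAt (Fb m μ δ) (LF m μ δ x) x := by
  have : HasFDerivAt (fun y : Fin m → ℝ => (∑ i, fbi δ (μ i) (y i)) + (m : ℝ) / ⨅ i, μ i)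
      (LF m μ δ x) x := by
    unfold LF
    apply HasFDerivAt.add_const
    apply HasFDerivAt.fun_sum
    intro i _
    have hproj := hasFDerivAt_apply (𝕜 := ℝ) i x
    exact (hasDerivAt_fbi δ (μ i) (x i)).comp_hasFDerivAt x hproj
  exact this.congr_of_eventuallyEq (Filter.Eventually.of_forall fun y => (Fb_eq_sum m μ δ y))

lemma hasFDerivAt_Vpd (m : ℕ) (μ : Fin m → ℝ) (δ q : ℝ) (x : Fin m → ℝ)
    (hF : Fb m μ δ x ≠ 0) :
    HasFDerivAt (Vpd m μ δ q) ((q * Fb m μ δ x ^ (q-1)) • LF m μ δ x) x := by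
  have h := (Real.hasDerivAt_rpow_const (p := q) (Or.inl hF)).comp_hasFDerivAt x
    (hasFDerivAt_Fb m μ δ x)
  exact h

lemma fderiv_Vpd (m : ℕ) (μ : Fin m → ℝ) (δ q : ℝ) (x : Fin m → ℝ)
    (hF : Fb m μ δ x ≠ 0) (v : Fin m → ℝ) :
    fderiv ℝ (Vpd m μ δ q) x v
      = q * Fb m μ δ x ^ (q-1) * ∑ i, gd δ (x i) / μ i * v i := by
  rw [(hasFDerivAt_Vpd m μ δ q x hF).fderiv]
  rw [ContinuousLinearMap.smul_apply, LF_apply, smul_eq_mul]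

lemma fderiv_Vpd_single (m : ℕ) (μ : Fin m → ℝ) (δ q : ℝ) (y : Fin m → ℝ)
    (hF : Fb m μ δ y ≠ 0) (i : Fin m) :
    fderiv ℝ (Vpd m μ δ q) y (Pi.single i 1)
      = q * Fb m μ δ y ^ (q-1) * (gd δ (y i) / μ i) := by
  rw [(hasFDerivAt_Vpd m μ δ q y hF).fderiv, ContinuousLinearMap.smul_apply,
    LF_single, smul_eq_mul]

lemma hasFDerivAt_W (m : ℕ) (μ : Fin m → ℝ) (δ q : ℝ) (x : Fin m → ℝ)
    (hF : Fb m μ δ x ≠ 0) (i : Fin m) :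
    HasFDerivAt (fun y => q * Fb m μ δ y ^ (q-1) * (gd δ (y i) / μ i))
      ((q * Fb m μ δ x ^ (q-1)) • ((gd2 δ (x i) / μ i) • ContinuousLinearMap.proj i)
        + (gd δ (x i) / μ i) • ((q * ((q-1) * Fb m μ δ x ^ (q-1-1))) • LF m μ δ x)) x := by
  have h1 : HasFDerivAt (fun y => q * Fb m μ δ y ^ (q-1))
      ((q * ((q-1) * Fb m μ δ x ^ (q-1-1))) • LF m μ δ x) x := by
    have hd : HasDerivAt (fun s : ℝ => q * s ^ (q-1))
        (q * ((q-1) * (Fb m μ δ x) ^ (q-1-1))) (Fb m μ δ x) := by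
      have h9 : HasDerivAt (fun s : ℝ => s ^ (q-1)) ((q-1) * (Fb m μ δ x) ^ (q-1-1))
          (Fb m μ δ x) := Real.hasDerivAt_rpow_const (p := q-1) (Or.inl hF)
      have h8 : HasDerivAt (fun s : ℝ => q * s ^ (q-1))
          (q * ((q-1) * (Fb m μ δ x) ^ (q-1-1))) (Fb m μ δ x) :=
        HasDerivAt.const_mul (𝕜 := ℝ) (𝔸 := ℝ) q h9
      exact h8
    have h0 := hd.comp_hasFDerivAt x (hasFDerivAt_Fb m μ δ x)
    exact h0
  have h2 : HasFDerivAt (fun y : Fin m → ℝ => gd δ (y i) / μ i)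
      ((gd2 δ (x i) / μ i) • (ContinuousLinearMap.proj i : (Fin m → ℝ) →L[ℝ] ℝ)) x := by
    have hproj := hasFDerivAt_apply (𝕜 := ℝ) i x
    exact ((hasDerivAt_gd δ (x i)).div_const (μ i)).comp_hasFDerivAt x hproj
  exact h1.mul h2

lemma traceHess_Vpd (m : ℕ) (μ : Fin m → ℝ) (δ q : ℝ) (x : Fin m → ℝ)
    (a : Matrix (Fin m) (Fin m) ℝ) (hF : ∀ y, Fb m μ δ y ≠ 0) :
    traceHess m a (Vpd m μ δ q) x =
      (∑ i, ∑ j, a i j * (gd δ (x i) / μ i) * (gd δ (x j) / μ j))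
          * (q * (q-1) * Fb m μ δ x ^ (q-1-1))
        + (∑ i, a i i * (gd2 δ (x i) / μ i)) * (q * Fb m μ δ x ^ (q-1)) := by
  unfold traceHess
  have key : ∀ i j : Fin m,
      fderiv ℝ (fun y => fderiv ℝ (Vpd m μ δ q) y (Pi.single i 1)) x (Pi.single j 1)
      = (q * Fb m μ δ x ^ (q-1)) * ((gd2 δ (x i) / μ i) * (if i = j then 1 else 0))
        + (gd δ (x i) / μ i) * ((q * ((q-1) * Fb m μ δ x ^ (q-1-1))) * (gd δ (x j) / μ j)) := by
    intro i j
    have hfn : (fun y => fderiv ℝ (Vpd m μ δ q) y (Pi.single i 1))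
        = fun y => q * Fb m μ δ y ^ (q-1) * (gd δ (y i) / μ i) :=
      funext fun y => fderiv_Vpd_single m μ δ q y (hF y) i
    rw [hfn, (hasFDerivAt_W m μ δ q x (hF x) i).fderiv]
    simp only [ContinuousLinearMap.add_apply, ContinuousLinearMap.smul_apply,
      ContinuousLinearMap.proj_apply, LF_single, smul_eq_mul, Pi.single_apply]
  rw [Finset.sum_congr rfl fun i _ => Finset.sum_congr rfl fun j _ => by rw [key i j]]
  rw [Finset.sum_congr rfl fun i _ => Finset.sum_congr rfl fun j _ => mul_add (a i j) _ _]
  rw [Finset.sum_congr rfl fun i (_ : i ∈ Finset.univ) => Finset.sum_add_distrib]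
  rw [Finset.sum_add_distrib, add_comm]
  congr 1
  · rw [Finset.sum_mul]
    refine Finset.sum_congr rfl fun i _ => ?_
    rw [Finset.sum_mul]
    refine Finset.sum_congr rfl fun j _ => ?_
    ring
  · -- diagonal part
    rw [Finset.sum_mul]
    refine Finset.sum_congr rfl fun i _ => ?_
    rw [Finset.sum_eq_single i]
    · norm_num
      ring
    · intro j _ hji
      simp [if_neg (Ne.symm hji)]
    · intro h; exact absurd (Finset.mem_univ i) h

lemma iInf_mu_pos {m : ℕ} {μ : Fin m → ℝ} (hm : 1 ≤ m) (hμ : ∀ i, 0 < μ i) :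
    0 < ⨅ i, μ i := by
  haveI : Nonempty (Fin m) := Fin.pos_iff_nonempty.mp hm
  obtain ⟨i0, hi0⟩ := Finite.exists_min μ
  exact lt_of_lt_of_le (hμ i0) (le_ciInf hi0)

lemma iInf_mu_le {m : ℕ} {μ : Fin m → ℝ} (hm : 1 ≤ m) (i : Fin m) :
    (⨅ j, μ j) ≤ μ i := by
  haveI : Nonempty (Fin m) := Fin.pos_iff_nonempty.mp hm
  exact ciInf_le (Finite.bddBelow_range μ) i

lemma Fb_ge {m : ℕ} {μ : Fin m → ℝ} (hm : 1 ≤ m) (hμ : ∀ i, 0 < μ i)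
    {δ : ℝ} (hδ0 : 0 ≤ δ) (hδ : δ ≤ 1/2) (x : Fin m → ℝ) :
    3*(m:ℝ)/(8*(⨅ i, μ i)) ≤ Fb m μ δ x := by
  set μm := ⨅ i, μ i with hμm_def
  have hμm : 0 < μm := iInf_mu_pos hm hμ
  have hterm : ∀ i : Fin m, -(5/8)/μm ≤ fbi δ (μ i) (x i) := by
    intro i
    have p1 := psi_lb (-(x i))
    have p2 := psi_lb (δ * x i)
    have hd2 : δ^2 ≤ 1/4 := by nlinarith
    have h1 : -(5/8) ≤ δ^2 * psi (-(x i)) + psi (δ * x i) := by nlinarith [sq_nonneg δ]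
    have h2 : -(5/8)/μ i ≤ (δ^2 * psi (-(x i)) + psi (δ * x i))/μ i :=
      (div_le_div_iff_of_pos_right (hμ i)).mpr h1
    refine le_trans ?_ h2
    rw [div_le_div_iff₀ (by positivity) (hμ i)]
    nlinarith [iInf_mu_le hm (μ := μ) i]
  have hsum : (m : ℝ) * (-(5/8)/μm) ≤ ∑ i, fbi δ (μ i) (x i) := by
    calc (m:ℝ) * (-(5/8)/μm) = ∑ _i : Fin m, -(5/8)/μm := by
          rw [Finset.sum_const, Finset.card_univ, Fintype.card_fin, nsmul_eq_mul]
      _ ≤ _ := Finset.sum_le_sum fun i _ => hterm i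
  rw [Fb_eq_sum]
  have heq : (m:ℝ) * (-(5/8)/μm) + (m:ℝ)/μm = 3*(m:ℝ)/(8*μm) := by
    field_simp; ring
  linarith

lemma Fb_pos {m : ℕ} {μ : Fin m → ℝ} (hm : 1 ≤ m) (hμ : ∀ i, 0 < μ i)
    {δ : ℝ} (hδ0 : 0 ≤ δ) (hδ : δ ≤ 1/2) (x : Fin m → ℝ) : 0 < Fb m μ δ x := by
  have h := Fb_ge hm hμ hδ0 hδ x
  have hμm : 0 < ⨅ i, μ i := iInf_mu_pos hm hμ
  have hmp : (0:ℝ) < m := by exact_mod_cast hm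
  have : 0 < 3*(m:ℝ)/(8*(⨅ i, μ i)) := by positivity
  linarith

lemma Fb_ub {m : ℕ} {μ : Fin m → ℝ} (hm : 1 ≤ m) (hμ : ∀ i, 0 < μ i)
    {δ : ℝ} (hδ0 : 0 ≤ δ) (hδ : δ ≤ 1) (x : Fin m → ℝ) :
    Fb m μ δ x ≤ ((m:ℝ) + 2*m + 2*∑ i, |x i|)/(⨅ i, μ i) := by
  set μm := ⨅ i, μ i with hμm_def
  have hμm : 0 < μm := iInf_mu_pos hm hμ
  have hterm : ∀ i : Fin m, fbi δ (μ i) (x i) ≤ (2 + 2*|x i|)/μm := by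
    intro i
    have hnum : δ^2 * psi (-(x i)) + psi (δ * x i) ≤ 2 + 2*|x i| := by
      have u1 : psi (-(x i)) ≤ 1 + |x i| := by
        have := psi_ub (-(x i)); rwa [abs_neg] at this
      have u2 : psi (δ * x i) ≤ 1 + |x i| := by
        have := psi_ub (δ * x i)
        have : psi (δ * x i) ≤ 1 + |δ * x i| := this
        have h3 : |δ * x i| ≤ |x i| := by
          rw [abs_mul, abs_of_nonneg hδ0]
          nlinarith [abs_nonneg (x i)]
        linarith
      have u3 : δ^2 * psi (-(x i)) ≤ 1 + |x i| := by
        rcases le_or_gt 0 (psi (-(x i))) with h | h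
        · have hq : δ^2 ≤ 1 := by nlinarith
          have : δ^2 * psi (-(x i)) ≤ 1 * psi (-(x i)) :=
            mul_le_mul_of_nonneg_right hq h
          have h0 : (0:ℝ) ≤ |x i| := abs_nonneg _
          nlinarith
        · have h0 : (0:ℝ) ≤ |x i| := abs_nonneg _
          nlinarith [sq_nonneg δ]
      linarith
    have h2 : (δ^2 * psi (-(x i)) + psi (δ * x i))/μ i ≤ (2 + 2*|x i|)/μ i :=
      (div_le_div_iff_of_pos_right (hμ i)).mpr hnum
    refine le_trans h2 ?_
    have h0 : (0:ℝ) ≤ 2 + 2*|x i| := by positivity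
    exact div_le_div_of_nonneg_left h0 hμm (iInf_mu_le hm i)
  rw [Fb_eq_sum]
  have hsum : ∑ i, fbi δ (μ i) (x i) ≤ (2*m + 2*∑ i, |x i|)/μm := by
    calc ∑ i, fbi δ (μ i) (x i) ≤ ∑ i, (2 + 2*|x i|)/μm :=
          Finset.sum_le_sum fun i _ => hterm i
      _ = (∑ i, (2 + 2*|x i|))/μm := by rw [Finset.sum_div]
      _ = (2*m + 2*∑ i, |x i|)/μm := by
          rw [Finset.sum_add_distrib, Finset.sum_const, Finset.card_univ,
            Fintype.card_fin, nsmul_eq_mul, Finset.mul_sum]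
          ring_nf
  have : (m:ℝ)/μm + (2*m + 2*∑ i, |x i|)/μm = ((m:ℝ) + 2*m + 2*∑ i, |x i|)/μm := by
    field_simp
    ring
  linarith

lemma gd_le {δ t : ℝ} (hδ0 : 0 ≤ δ) : gd δ t ≤ δ := by
  unfold gd
  have h1 : δ * psi' (δ*t) ≤ δ * 1 := mul_le_mul_of_nonneg_left (psi'_le_one _) hδ0
  have h2 : 0 ≤ δ^2 * psi' (-t) := mul_nonneg (sq_nonneg δ) (psi'_nonneg _)
  linarith

lemma gd_ge {δ t : ℝ} (hδ0 : 0 ≤ δ) : -δ^2 ≤ gd δ t := by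
  unfold gd
  have h1 : 0 ≤ δ * psi' (δ*t) := mul_nonneg hδ0 (psi'_nonneg _)
  have h2 : δ^2 * psi' (-t) ≤ δ^2 * 1 := mul_le_mul_of_nonneg_left (psi'_le_one _) (sq_nonneg δ)
  linarith

lemma gd_of_ge_one {δ t : ℝ} (hδ0 : 0 ≤ δ) (ht : 1 ≤ t) : gd δ t = δ := by
  unfold gd
  rw [psi'_of_nonneg (by nlinarith : (0:ℝ) ≤ δ * t), psi'_of_le (by linarith : -t ≤ -1)]
  ring

lemma abs_gd_le {δ t : ℝ} (hδ0 : 0 ≤ δ) (hδ1 : δ ≤ 1) : |gd δ t| ≤ δ := by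
  rw [abs_le]
  constructor
  · have := gd_ge (t := t) hδ0; nlinarith
  · exact gd_le hδ0

/-- per-coordinate bound for the `-x_i g_i` term -/
lemma T2_coord {δ t : ℝ} (hδ0 : 0 ≤ δ) (hδ1 : δ ≤ 1) :
    -t * gd δ t ≤ min (δ * max (-t) 0) (4/9) - δ * max t 0 - δ^2 * max (-t) 0 + δ^2 := by
  rcases le_or_gt 0 t with h | h
  · rw [max_eq_left h, max_eq_right (by linarith : -t ≤ 0)]
    have e1 : psi' (δ * t) = 1 := psi'_of_nonneg (by positivity)
    have e2 : t * psi' (-t) ≤ 1 := key1 h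
    unfold gd
    rw [e1]
    have : -t * (δ * 1 - δ^2 * psi' (-t)) = -(δ*t) + δ^2 * (t * psi' (-t)) := by ring
    rw [this]
    have h2 : δ^2 * (t * psi' (-t)) ≤ δ^2 * 1 := mul_le_mul_of_nonneg_left e2 (sq_nonneg δ)
    have h3 : (0:ℝ) ≤ min (δ * 0) (4/9) := by norm_num
    nlinarith
  · rw [max_eq_right h.le, max_eq_left (by linarith : 0 ≤ -t)]
    have e1 : psi' (-t) = 1 := psi'_of_nonneg (by linarith)
    unfold gd
    rw [e1]
    have key : -t * (δ * psi' (δ*t)) ≤ min (δ * -t) (4/9) := by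
      apply le_min
      · have h1 : psi' (δ*t) ≤ 1 := psi'_le_one _
        have h2 : 0 ≤ -t := by linarith
        have h3 : 0 ≤ δ * -t := mul_nonneg hδ0 h2
        nlinarith
      · have hs : 0 ≤ δ * -t := mul_nonneg hδ0 (by linarith)
        have h49 := key49 hs
        have he : -(δ * -t) = δ * t := by ring
        rw [he] at h49
        nlinarith [h49]
    nlinarith [sq_nonneg δ]

/-- per-coordinate bound for the `u` terms -/
lemma T34_coord {δ g u r : ℝ} (hδ0 : 0 ≤ δ) (hg1 : g ≤ δ) (hg2 : -δ^2 ≤ g)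
    (hu : 0 ≤ u) (hr0 : 0 ≤ r) (hr1 : δ * (1 + r) ≤ 1) :
    u * g * (1 - r) ≤ δ * u := by
  have key : g * (1 - r) ≤ δ := by
    rcases le_or_gt r 1 with h | h
    · have h1 : g * (1-r) ≤ δ * (1-r) := mul_le_mul_of_nonneg_right hg1 (by linarith)
      nlinarith
    · have h1 : g * (1-r) ≤ (-δ^2) * (1-r) := by
        have := mul_le_mul_of_nonpos_right hg2 (by linarith : 1 - r ≤ 0)
        linarith
      have h2 : (-δ^2) * (1-r) = δ^2 * (r - 1) := by ring
      have h3 : δ^2 * (r-1) ≤ δ * 1 := by nlinarith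
      nlinarith
  calc u * g * (1-r) = u * (g * (1-r)) := by ring
    _ ≤ u * δ := mul_le_mul_of_nonneg_left key hu
    _ = δ * u := by ring

/-- Master drift bound. -/
lemma drift_master (m : ℕ) (μ γ : Fin m → ℝ) (hm : 1 ≤ m)
    (hμ : ∀ i, 0 < μ i) (hγ : ∀ i, 0 ≤ γ i) (βt : ℝ) (hβ : 0 < βt)
    {δ : ℝ} (hδ0 : 0 < δ) (hδ1 : δ ≤ 1)
    (hδγ : δ * (1 + ∑ i, γ i / μ i) ≤ 1)
    (x u : Fin m → ℝ) (hu0 : ∀ i, 0 ≤ u i) (hu1 : ∑ i, u i = 1) :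
    ∑ i, drift m μ γ βt x u i * (gd δ (x i) / μ i)
      ≤ (βt + m)*δ^2 - (βt/m)*δ*(∑ i, psi' (δ * x i))
        + (∑ i, min (δ * max (-x i) 0) (4/9))
        - δ * (∑ i, max (x i) 0) - δ^2 * (∑ i, max (-x i) 0)
        + δ * max (∑ i, x i) 0 := by
  have hmp : (0:ℝ) < m := by exact_mod_cast hm
  set s := max (∑ j, x j) 0 with hs_def
  have hs0 : 0 ≤ s := le_max_right _ _
  -- pointwise identity
  have hid : ∀ i, drift m μ γ βt x u i * (gd δ (x i) / μ i)
      = -(βt/m) * gd δ (x i) + (-(x i) * gd δ (x i))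
        + s * (u i * gd δ (x i) * (1 - γ i / μ i)) := by
    intro i
    unfold drift
    have hne : μ i ≠ 0 := (hμ i).ne'
    field_simp
    ring
  rw [Finset.sum_congr rfl fun i _ => hid i]
  rw [Finset.sum_add_distrib, Finset.sum_add_distrib]
  have hT1 : ∑ i, -(βt/m) * gd δ (x i)
      ≤ βt*δ^2 - (βt/m)*δ*(∑ i, psi' (δ * x i)) := by
    have hco : ∀ i : Fin m, -(βt/(m:ℝ)) * gd δ (x i)
        ≤ (βt/(m:ℝ))*δ^2 - (βt/(m:ℝ))*δ* psi' (δ * x i) := by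
      intro i
      unfold gd
      have h1 : psi' (-x i) ≤ 1 := psi'_le_one _
      have h2 : 0 ≤ psi' (-x i) := psi'_nonneg _
      have h3 : 0 ≤ (βt/(m:ℝ))*δ^2 := by positivity
      have hb : (βt/(m:ℝ))*δ^2*psi' (-x i) ≤ (βt/(m:ℝ))*δ^2*1 :=
        mul_le_mul_of_nonneg_left h1 h3
      have hexp : -(βt/(m:ℝ)) * (δ * psi' (δ*x i) - δ^2 * psi' (-x i))
          = (βt/(m:ℝ))*δ^2 - (βt/(m:ℝ))*δ*psi' (δ*x i)
            - ((βt/(m:ℝ))*δ^2*1 - (βt/(m:ℝ))*δ^2*psi' (-x i)) := by ring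
      rw [hexp]
      linarith
    calc ∑ i, -(βt/m) * gd δ (x i)
        ≤ ∑ i, ((βt/(m:ℝ))*δ^2 - (βt/(m:ℝ))*δ* psi' (δ * x i)) := by
          refine Finset.sum_le_sum fun i _ => ?_
          have := hco i
          linarith [hco i]
      _ = (m:ℝ)*((βt/(m:ℝ))*δ^2) - (βt/(m:ℝ))*δ*(∑ i, psi' (δ * x i)) := by
          rw [Finset.sum_sub_distrib, Finset.sum_const, Finset.card_univ,
            Fintype.card_fin, nsmul_eq_mul, ← Finset.mul_sum]
      _ = βt*δ^2 - (βt/(m:ℝ))*δ*(∑ i, psi' (δ * x i)) := by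
          field_simp
  have hT2 : ∑ i, (-(x i) * gd δ (x i))
      ≤ (∑ i, min (δ * max (-x i) 0) (4/9))
        - δ * (∑ i, max (x i) 0) - δ^2 * (∑ i, max (-x i) 0) + m*δ^2 := by
    calc ∑ i, (-(x i) * gd δ (x i))
        ≤ ∑ i, (min (δ * max (-x i) 0) (4/9) - δ * max (x i) 0
            - δ^2 * max (-x i) 0 + δ^2) :=
          Finset.sum_le_sum fun i _ => T2_coord hδ0.le hδ1
      _ = _ := by
          rw [Finset.sum_add_distrib, Finset.sum_sub_distrib, Finset.sum_sub_distrib,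
            Finset.sum_const, Finset.card_univ, Fintype.card_fin, nsmul_eq_mul,
            Finset.mul_sum, Finset.mul_sum]
  have hT34 : ∑ i, s * (u i * gd δ (x i) * (1 - γ i / μ i)) ≤ δ * s := by
    have hco : ∀ i : Fin m, u i * gd δ (x i) * (1 - γ i / μ i) ≤ δ * u i := by
      intro i
      apply T34_coord hδ0.le (gd_le hδ0.le) (gd_ge hδ0.le) (hu0 i)
        (div_nonneg (hγ i) (hμ i).le)
      have hterm : γ i / μ i ≤ ∑ j, γ j / μ j :=
        Finset.single_le_sum (fun j _ => div_nonneg (hγ j) (hμ j).le) (Finset.mem_univ i)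
      nlinarith
    calc ∑ i, s * (u i * gd δ (x i) * (1 - γ i / μ i))
        ≤ ∑ i, s * (δ * u i) := by
          refine Finset.sum_le_sum fun i _ => mul_le_mul_of_nonneg_left (hco i) hs0
      _ = δ * s := by
          rw [← Finset.mul_sum, ← Finset.mul_sum, hu1]
          ring
  linarith

lemma gd2_nonneg {δ t : ℝ} : 0 ≤ gd2 δ t :=
  add_nonneg (mul_nonneg (sq_nonneg δ) (psi''_nonneg _)) (mul_nonneg (sq_nonneg δ) (psi''_nonneg _))

lemma gd2_le {δ t : ℝ} : gd2 δ t ≤ 3 * δ^2 := by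
  unfold gd2
  have h1 : δ^2 * psi'' (δ*t) ≤ δ^2 * (3/2) := mul_le_mul_of_nonneg_left (psi''_le _) (sq_nonneg δ)
  have h2 : δ^2 * psi'' (-t) ≤ δ^2 * (3/2) := mul_le_mul_of_nonneg_left (psi''_le _) (sq_nonneg δ)
  linarith

/-- Assume `β̃ > 0`. For every `p > 1` there exist `δ ∈ (0,1]`, a constant
`C̃₀' > 0` and a compact set `K' ⊂ ℝ^m` such that
`ℒ^u 𝒱_{p,δ}(x) ≤ C̃₀' 1_{K'}(x) - pδ (3β̃/(4m)) 𝒱_{p-1,δ}(x)` for all `x` and all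
`u ∈ Δ`, where `ℒ^u f(x) = (1/2) trace(σσᵀ ∇²f(x)) + ⟨b̃(x,u), ∇f(x)⟩`. -/
theorem stmt_15 (m : ℕ) (hm : 1 ≤ m) (μ γ : Fin m → ℝ)
    (hμ : ∀ i, 0 < μ i) (hγ : ∀ i, 0 ≤ γ i)
    (βt : ℝ) (hβ : 0 < βt)
    (σ : Matrix (Fin m) (Fin m) ℝ)
    (p : ℝ) (hp : 1 < p) :
    ∃ δ : ℝ, 0 < δ ∧ δ ≤ 1 ∧ ∃ C : ℝ, 0 < C ∧ ∃ K : Set (Fin m → ℝ), IsCompact K ∧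
      ∀ x u : Fin m → ℝ, (∀ i, 0 ≤ u i) → ∑ i, u i = 1 →
        (1 / 2) * traceHess m (σ * σ.transpose) (Vpd m μ δ p) x
            + fderiv ℝ (Vpd m μ δ p) x (drift m μ γ βt x u) ≤
          K.indicator (fun _ => C) x
            - p * δ * (3 * βt / (4 * (m : ℝ))) * Vpd m μ δ (p - 1) x := by
  have hmp : (0:ℝ) < m := by exact_mod_cast hm
  have hp0 : 0 < p := by linarith
  have hp1 : 0 ≤ p - 1 := by linarith
  obtain ⟨μm, hμm_def⟩ : ∃ v : ℝ, v = ⨅ i, μ i := ⟨_, rfl⟩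
  have hμm : 0 < μm := hμm_def ▸ iInf_mu_pos hm hμ
  have hμm_le : ∀ i, μm ≤ μ i := fun i => hμm_def ▸ iInf_mu_le hm i
  obtain ⟨a, ha_def⟩ : ∃ v : Matrix (Fin m) (Fin m) ℝ, v = σ * σ.transpose := ⟨_, rfl⟩
  have haii : ∀ i, 0 ≤ a i i := by
    intro i
    rw [ha_def, Matrix.mul_apply]
    refine Finset.sum_nonneg fun k _ => ?_
    rw [Matrix.transpose_apply]
    exact mul_self_nonneg _
  obtain ⟨Sa, hSa_def⟩ : ∃ v : ℝ, v = ∑ i, ∑ j, |a i j| := ⟨_, rfl⟩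
  have hSa : 0 ≤ Sa := hSa_def ▸
    Finset.sum_nonneg fun i _ => Finset.sum_nonneg fun j _ => abs_nonneg _
  obtain ⟨Da, hDa_def⟩ : ∃ v : ℝ, v = ∑ i, a i i := ⟨_, rfl⟩
  have hDa : 0 ≤ Da := hDa_def ▸ Finset.sum_nonneg fun i _ => haii i
  obtain ⟨Fmin, hFmin_def⟩ : ∃ v : ℝ, v = 3*(m:ℝ)/(8*μm) := ⟨_, rfl⟩
  have hFmin : 0 < Fmin := by
    rw [hFmin_def]; exact div_pos (by linarith only [hmp]) (by linarith only [hμm])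
  obtain ⟨A, hA_def⟩ : ∃ v : ℝ, v = (p-1) * Sa / (2 * Fmin * μm^2) + 3*Da/(2*μm) := ⟨_, rfl⟩
  have hA : 0 ≤ A := by
    rw [hA_def]
    have h1 : 0 ≤ (p-1) * Sa / (2 * Fmin * μm^2) :=
      div_nonneg (mul_nonneg hp1 hSa)
        (mul_nonneg (by linarith only [hFmin]) (sq_nonneg μm))
    have h2 : 0 ≤ 3*Da/(2*μm) :=
      div_nonneg (by linarith only [hDa]) (by linarith only [hμm])
    linarith only [h1, h2]
  obtain ⟨Cγ, hCγ_def⟩ : ∃ v : ℝ, v = 1 + ∑ i, γ i / μ i := ⟨_, rfl⟩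
  have hCγ : 1 ≤ Cγ := by
    rw [hCγ_def]
    have : 0 ≤ ∑ i, γ i / μ i :=
      Finset.sum_nonneg fun i _ => div_nonneg (hγ i) (hμ i).le
    linarith
  have hCγ0 : 0 < Cγ := by linarith only [hCγ]
  obtain ⟨J, hJ_def⟩ : ∃ v : ℝ, v = βt + m + A + 1 := ⟨_, rfl⟩
  have hJ : 0 < J := by rw [hJ_def]; linarith only [hβ, hmp, hA]
  obtain ⟨δ, hδ_def⟩ : ∃ v : ℝ, v = min (1/2) (min (1/Cγ) (βt/(4*m*J))) := ⟨_, rfl⟩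
  have hδ0 : 0 < δ := by
    rw [hδ_def]
    apply lt_min (by norm_num)
    exact lt_min (div_pos one_pos hCγ0)
      (div_pos hβ (mul_pos (by linarith only [hmp] : (0:ℝ) < 4*m) hJ))
  have hδhalf : δ ≤ 1/2 := hδ_def ▸ min_le_left _ _
  have hδ1 : δ ≤ 1 := le_trans hδhalf (by norm_num)
  have hδγ : δ * Cγ ≤ 1 := by
    have h1 : δ ≤ 1/Cγ := hδ_def ▸ le_trans (min_le_right _ _) (min_le_left _ _)
    rw [div_eq_mul_inv, one_mul] at h1
    calc δ * Cγ ≤ Cγ⁻¹ * Cγ := mul_le_mul_of_nonneg_right h1 hCγ0.le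
      _ = 1 := inv_mul_cancel₀ hCγ0.ne'
  have hδJ : δ ≤ βt/(4*m*J) := hδ_def ▸ le_trans (min_le_right _ _) (min_le_right _ _)
  obtain ⟨κ, hκ_def⟩ : ∃ v : ℝ, v = 3 * βt / (4 * (m:ℝ)) := ⟨_, rfl⟩
  have hκ : 0 < κ := by
    rw [hκ_def]; exact div_pos (by linarith only [hβ]) (by linarith only [hmp])
  obtain ⟨N1, hN1_def⟩ : ∃ v : ℝ, v = (4*(m:ℝ)/9 + κ*δ + J*δ^2)/δ^2 := ⟨_, rfl⟩
  have hδsq : 0 < δ^2 := pow_pos hδ0 2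
  have hN1 : 0 < N1 := by
    rw [hN1_def]
    apply div_pos _ hδsq
    have h1 : 0 ≤ κ*δ := mul_nonneg hκ.le hδ0.le
    have h2 : 0 ≤ J*δ^2 := mul_nonneg hJ.le hδsq.le
    have h3 : 0 < 4*(m:ℝ)/9 := by linarith only [hmp]
    linarith only [h1, h2, h3]
  obtain ⟨R, hR_def⟩ : ∃ v : ℝ, v = 2*N1 + 1 := ⟨_, rfl⟩
  have hR : 0 < R := by rw [hR_def]; linarith only [hN1]
  obtain ⟨Fmax, hFmax_def⟩ : ∃ v : ℝ, v = ((m:ℝ) + 2*m + 2*R)/μm := ⟨_, rfl⟩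
  have hFmax : 0 < Fmax := by
    rw [hFmax_def]; exact div_pos (by linarith only [hmp, hR]) hμm
  obtain ⟨Sμ, hSμ_def⟩ : ∃ v : ℝ, v = ∑ i, μ i := ⟨_, rfl⟩
  have hSμ : 0 ≤ Sμ := hSμ_def ▸ Finset.sum_nonneg fun i _ => (hμ i).le
  obtain ⟨Sγ, hSγ_def⟩ : ∃ v : ℝ, v = ∑ i, γ i := ⟨_, rfl⟩
  have hSγ : 0 ≤ Sγ := hSγ_def ▸ Finset.sum_nonneg fun i _ => hγ i
  obtain ⟨Bb, hBb_def⟩ : ∃ v : ℝ, v = (δ/μm)*((βt/m)*Sμ + 2*R*Sμ + R*Sγ) := ⟨_, rfl⟩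
  have hBb : 0 ≤ Bb := by
    rw [hBb_def]
    have h1 : 0 ≤ δ/μm := div_nonneg hδ0.le hμm.le
    have h2 : 0 ≤ (βt/m)*Sμ := mul_nonneg (div_nonneg hβ.le hmp.le) hSμ
    have h3 : 0 ≤ 2*R*Sμ := mul_nonneg (by linarith only [hR]) hSμ
    have h4 : 0 ≤ R*Sγ := mul_nonneg hR.le hSγ
    exact mul_nonneg h1 (by linarith only [h2, h3, h4])
  obtain ⟨C, hC_def⟩ : ∃ v : ℝ, v = 1 + p * Fmax^(p-1) * (A*δ^2 + Bb + δ*κ) := ⟨_, rfl⟩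
  have hFmaxp : 0 ≤ Fmax^(p-1) := Real.rpow_nonneg hFmax.le _
  have hABκ : 0 ≤ A*δ^2 + Bb + δ*κ :=
    add_nonneg (add_nonneg (mul_nonneg hA hδsq.le) hBb) (mul_nonneg hδ0.le hκ.le)
  have hC : 0 < C := by
    rw [hC_def]
    have h6 : 0 ≤ p * Fmax^(p-1) * (A*δ^2 + Bb + δ*κ) :=
      mul_nonneg (mul_nonneg hp0.le hFmaxp) hABκ
    linarith only [h6]
  refine ⟨δ, hδ0, hδ1, C, hC, {x | ∑ i, |x i| ≤ R}, ?_, ?_⟩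
  · -- compactness
    have hclosed : IsClosed {x : Fin m → ℝ | ∑ i, |x i| ≤ R} := by
      have hcont : Continuous (fun x : Fin m → ℝ => ∑ i, |x i|) :=
        continuous_finset_sum _ fun i _ => (continuous_apply i).abs
      exact isClosed_le hcont continuous_const
    refine IsCompact.of_isClosed_subset (isCompact_closedBall (0 : Fin m → ℝ) R) hclosed ?_
    intro x hx
    have hx' : ∑ i, |x i| ≤ R := hx
    rw [mem_closedBall_zero_iff, pi_norm_le_iff_of_nonneg hR.le]
    intro i
    have h1 : |x i| ≤ ∑ j, |x j| :=
      Finset.single_le_sum (fun j _ => abs_nonneg (x j)) (Finset.mem_univ i)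
    exact le_trans h1 hx'
  intro x u hu0 hu1
  -- positivity of the base
  have hFpos : ∀ y, 0 < Fb m μ δ y := fun y => Fb_pos hm hμ hδ0.le hδhalf y
  have hFne : ∀ y, Fb m μ δ y ≠ 0 := fun y => (hFpos y).ne'
  -- rewrite the differential expressions
  rw [show σ * σ.transpose = a from ha_def.symm,
    show 3 * βt / (4 * (m:ℝ)) = κ from hκ_def.symm,
    traceHess_Vpd m μ δ p x a hFne, fderiv_Vpd m μ δ p x (hFne x) (drift m μ γ βt x u),
    Vpd_eq m μ δ (p-1) x]
  obtain ⟨F, hF_def⟩ : ∃ v : ℝ, v = Fb m μ δ x := ⟨_, rfl⟩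
  rw [show Fb m μ δ x = F from hF_def.symm]
  have hFge : Fmin ≤ F := by
    rw [hF_def, hFmin_def, hμm_def]
    exact Fb_ge hm hμ hδ0.le hδhalf x
  have hFx : 0 < F := hF_def ▸ hFpos x
  have hFp1 : 0 < F ^ (p-1) := Real.rpow_pos_of_pos hFx _
  have hFp11 : 0 ≤ F ^ (p-1-1) := Real.rpow_nonneg hFx.le _
  -- trace estimate
  have habsG : ∀ i, |gd δ (x i) / μ i| ≤ δ/μm := by
    intro i
    rw [abs_div, abs_of_pos (hμ i)]
    exact div_le_div₀ hδ0.le (abs_gd_le hδ0.le hδ1) hμm (hμm_le i)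
  have hdm : 0 ≤ δ/μm := div_nonneg hδ0.le hμm.le
  have hTrQ : (∑ i, ∑ j, a i j * (gd δ (x i) / μ i) * (gd δ (x j) / μ j))
      ≤ Sa * (δ/μm)^2 := by
    rw [hSa_def, Finset.sum_mul]
    refine Finset.sum_le_sum fun i _ => ?_
    rw [Finset.sum_mul]
    refine Finset.sum_le_sum fun j _ => ?_
    have h1 : a i j * (gd δ (x i) / μ i) * (gd δ (x j) / μ j)
        ≤ |a i j * (gd δ (x i) / μ i) * (gd δ (x j) / μ j)| := le_abs_self _
    rw [abs_mul, abs_mul] at h1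
    have h2 : |a i j| * |gd δ (x i) / μ i| * |gd δ (x j) / μ j|
        ≤ |a i j| * (δ/μm) * (δ/μm) := by
      apply mul_le_mul (mul_le_mul_of_nonneg_left (habsG i) (abs_nonneg _)) (habsG j)
        (abs_nonneg _) (mul_nonneg (abs_nonneg _) hdm)
    calc a i j * (gd δ (x i) / μ i) * (gd δ (x j) / μ j)
        ≤ |a i j| * |gd δ (x i) / μ i| * |gd δ (x j) / μ j| := h1
      _ ≤ |a i j| * (δ/μm) * (δ/μm) := h2
      _ = |a i j| * (δ/μm)^2 := by ring
  have hTrD : (∑ i, a i i * (gd2 δ (x i) / μ i)) ≤ Da * (3*δ^2/μm) := by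
    rw [hDa_def, Finset.sum_mul]
    refine Finset.sum_le_sum fun i _ => ?_
    refine mul_le_mul_of_nonneg_left ?_ (haii i)
    exact div_le_div₀ (by positivity) gd2_le hμm (hμm_le i)
  have hmono : F ^ (p-1-1) ≤ F ^ (p-1) / Fmin := by
    rw [Real.rpow_sub_one hFx.ne']
    exact div_le_div_of_nonneg_left (Real.rpow_nonneg hFx.le _) hFmin hFge
  have htrace : (1/2) * ((∑ i, ∑ j, a i j * (gd δ (x i) / μ i) * (gd δ (x j) / μ j))
          * (p * (p-1) * F ^ (p-1-1))
        + (∑ i, a i i * (gd2 δ (x i) / μ i)) * (p * F ^ (p-1)))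
      ≤ p * F^(p-1) * (A * δ^2) := by
    have hM1 : 0 ≤ p * (p-1) * F ^ (p-1-1) := mul_nonneg (mul_nonneg hp0.le hp1) hFp11
    have e1 : (∑ i, ∑ j, a i j * (gd δ (x i) / μ i) * (gd δ (x j) / μ j))
          * (p * (p-1) * F ^ (p-1-1))
        ≤ (Sa * (δ/μm)^2) * (p * (p-1) * F ^ (p-1-1)) :=
      mul_le_mul_of_nonneg_right hTrQ hM1
    have e2 : (Sa * (δ/μm)^2) * (p * (p-1) * F ^ (p-1-1))
        ≤ (Sa * (δ/μm)^2) * (p * (p-1) * (F ^ (p-1) / Fmin)) := by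
      refine mul_le_mul_of_nonneg_left ?_ (mul_nonneg hSa (sq_nonneg _))
      exact mul_le_mul_of_nonneg_left hmono (mul_nonneg hp0.le hp1)
    have e3 : (∑ i, a i i * (gd2 δ (x i) / μ i)) * (p * F ^ (p-1))
        ≤ (Da * (3*δ^2/μm)) * (p * F ^ (p-1)) :=
      mul_le_mul_of_nonneg_right hTrD (mul_nonneg hp0.le hFp1.le)
    have e4 : (1/2) * ((Sa * (δ/μm)^2) * (p * (p-1) * (F ^ (p-1) / Fmin))
          + (Da * (3*δ^2/μm)) * (p * F ^ (p-1)))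
        = p * F^(p-1) * (A * δ^2) := by
      rw [hA_def]
      field_simp [hFmin.ne', hμm.ne']
    linarith only [e1, e2, e3, e4]
  -- drift estimate pieces
  obtain ⟨P, hP_def⟩ : ∃ v : ℝ, v = ∑ i, max (x i) 0 := ⟨_, rfl⟩
  obtain ⟨N, hN_def⟩ : ∃ v : ℝ, v = ∑ i, max (-x i) 0 := ⟨_, rfl⟩
  have hP0 : 0 ≤ P := hP_def ▸ Finset.sum_nonneg fun i _ => le_max_right _ _
  have hN0 : 0 ≤ N := hN_def ▸ Finset.sum_nonneg fun i _ => le_max_right _ _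
  have habs_eq : ∑ i, |x i| = P + N := by
    rw [hP_def, hN_def, ← Finset.sum_add_distrib]
    refine Finset.sum_congr rfl fun i _ => ?_
    rcases le_or_gt 0 (x i) with h | h
    · rw [abs_of_nonneg h, max_eq_left h, max_eq_right (by linarith : -x i ≤ 0)]; ring
    · rw [abs_of_neg h, max_eq_right h.le, max_eq_left (by linarith : (0:ℝ) ≤ -x i)]; ring
  have hsum_eq : ∑ i, x i = P - N := by
    rw [hP_def, hN_def, ← Finset.sum_sub_distrib]
    refine Finset.sum_congr rfl fun i _ => ?_
    rcases le_or_gt 0 (x i) with h | h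
    · rw [max_eq_left h, max_eq_right (by linarith : -x i ≤ 0)]; ring
    · rw [max_eq_right h.le, max_eq_left (by linarith : (0:ℝ) ≤ -x i)]; ring
  have hδγ' : δ * (1 + ∑ i, γ i / μ i) ≤ 1 := by rw [← hCγ_def]; exact hδγ
  have hmaster := drift_master m μ γ hm hμ hγ βt hβ hδ0 hδ1 hδγ' x u hu0 hu1
  rw [← hP_def, ← hN_def] at hmaster
  have hdriftsum : (∑ i, gd δ (x i) / μ i * drift m μ γ βt x u i)
      = ∑ i, drift m μ γ βt x u i * (gd δ (x i) / μ i) :=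
    Finset.sum_congr rfl fun i _ => mul_comm _ _
  have hMle1 : (∑ i, min (δ * max (-x i) 0) (4/9)) ≤ 4*m/9 := by
    calc (∑ i, min (δ * max (-x i) 0) (4/9)) ≤ ∑ _i : Fin m, (4/9 : ℝ) :=
        Finset.sum_le_sum fun i _ => min_le_right _ _
      _ = 4*m/9 := by
        rw [Finset.sum_const, Finset.card_univ, Fintype.card_fin, nsmul_eq_mul]; ring
  have hMle2 : (∑ i, min (δ * max (-x i) 0) (4/9)) ≤ δ * N := by
    rw [hN_def, Finset.mul_sum]
    exact Finset.sum_le_sum fun i _ => min_le_left _ _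
  have hψpos : 0 ≤ ∑ i, psi' (δ * x i) :=
    Finset.sum_nonneg fun i _ => psi'_nonneg _
  rcases le_or_gt (∑ i, |x i|) R with hin | hout
  · -- inside K
    have hxK : x ∈ {x : Fin m → ℝ | ∑ i, |x i| ≤ R} := hin
    rw [Set.indicator_of_mem hxK]
    have hxi : ∀ i, |x i| ≤ R := fun i =>
      le_trans (Finset.single_le_sum (fun j _ => abs_nonneg (x j)) (Finset.mem_univ i)) hin
    have hs_le : max (∑ j, x j) 0 ≤ R := by
      apply max_le _ hR.le
      calc ∑ j, x j ≤ |∑ j, x j| := le_abs_self _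
        _ ≤ ∑ j, |x j| := Finset.abs_sum_le_sum_abs _ _
        _ ≤ R := hin
    have hs0' : 0 ≤ max (∑ j, x j) 0 := le_max_right _ _
    have hu_le : ∀ i, u i ≤ 1 := by
      intro i
      rw [← hu1]
      exact Finset.single_le_sum (fun j _ => hu0 j) (Finset.mem_univ i)
    have hdrift_abs : ∀ i, |drift m μ γ βt x u i| ≤ (βt/m)*μ i + 2*R*μ i + R*γ i := by
      intro i
      unfold drift
      have h1 : |(-(βt / (m:ℝ)) * μ i)| = (βt/m)*μ i := by
        rw [abs_mul, abs_neg, abs_div, abs_of_pos hβ, abs_of_pos hmp, abs_of_pos (hμ i)]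
      have h2 : |μ i * (x i - max (∑ j, x j) 0 * u i)| ≤ 2*R*μ i := by
        rw [abs_mul, abs_of_pos (hμ i)]
        have hin2 : |x i - max (∑ j, x j) 0 * u i| ≤ 2*R := by
          have hb : |max (∑ j, x j) 0 * u i| ≤ R := by
            rw [abs_mul, abs_of_nonneg hs0', abs_of_nonneg (hu0 i)]
            calc max (∑ j, x j) 0 * u i ≤ R * 1 :=
              mul_le_mul hs_le (hu_le i) (hu0 i) hR.le
              _ = R := mul_one R
          calc |x i - max (∑ j, x j) 0 * u i| ≤ |x i| + |max (∑ j, x j) 0 * u i| :=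
              abs_sub _ _
            _ ≤ R + R := add_le_add (hxi i) hb
            _ = 2*R := by ring
        have := mul_le_mul_of_nonneg_left hin2 (hμ i).le
        linarith only [this]
      have h3 : |max (∑ j, x j) 0 * (γ i * u i)| ≤ R * γ i := by
        rw [abs_mul, abs_of_nonneg hs0', abs_mul, abs_of_nonneg (hγ i), abs_of_nonneg (hu0 i)]
        have hgu : max (∑ j, x j) 0 * (γ i * u i) ≤ R * (γ i * u i) :=
          mul_le_mul_of_nonneg_right hs_le (mul_nonneg (hγ i) (hu0 i))
        have hgu2 : R * (γ i * u i) ≤ R * (γ i * 1) :=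
          mul_le_mul_of_nonneg_left (mul_le_mul_of_nonneg_left (hu_le i) (hγ i)) hR.le
        linarith only [hgu, hgu2]
      calc |(-(βt / (m:ℝ)) * μ i - μ i * (x i - max (∑ j, x j) 0 * u i)
            - max (∑ j, x j) 0 * (γ i * u i))|
          ≤ |(-(βt / (m:ℝ)) * μ i - μ i * (x i - max (∑ j, x j) 0 * u i))|
            + |max (∑ j, x j) 0 * (γ i * u i)| := abs_sub _ _
        _ ≤ (|(-(βt / (m:ℝ)) * μ i)| + |μ i * (x i - max (∑ j, x j) 0 * u i)|)
            + |max (∑ j, x j) 0 * (γ i * u i)| := by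
            have := abs_sub (-(βt / (m:ℝ)) * μ i) (μ i * (x i - max (∑ j, x j) 0 * u i))
            linarith only [this]
        _ ≤ ((βt/m)*μ i + 2*R*μ i) + R*γ i := by
            rw [h1]
            linarith only [h2, h3]
        _ = (βt/m)*μ i + 2*R*μ i + R*γ i := by ring
    have hB_le : (∑ i, gd δ (x i) / μ i * drift m μ γ βt x u i) ≤ Bb := by
      have hterm : ∀ i, gd δ (x i) / μ i * drift m μ γ βt x u i
          ≤ (δ/μm) * ((βt/m)*μ i + 2*R*μ i + R*γ i) := by
        intro i
        have hrhs0 : 0 ≤ (βt/m)*μ i + 2*R*μ i + R*γ i := by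
          have q1 : 0 ≤ (βt/m)*μ i := mul_nonneg (div_nonneg hβ.le hmp.le) (hμ i).le
          have q2 : 0 ≤ 2*R*μ i := mul_nonneg (by linarith) (hμ i).le
          have q3 : 0 ≤ R*γ i := mul_nonneg hR.le (hγ i)
          linarith
        calc gd δ (x i) / μ i * drift m μ γ βt x u i
            ≤ |gd δ (x i) / μ i * drift m μ γ βt x u i| := le_abs_self _
          _ = |gd δ (x i) / μ i| * |drift m μ γ βt x u i| := abs_mul _ _
          _ ≤ (δ/μm) * ((βt/m)*μ i + 2*R*μ i + R*γ i) :=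
              mul_le_mul (habsG i) (hdrift_abs i) (abs_nonneg _) hdm
      calc (∑ i, gd δ (x i) / μ i * drift m μ γ βt x u i)
          ≤ ∑ i, (δ/μm) * ((βt/m)*μ i + 2*R*μ i + R*γ i) :=
            Finset.sum_le_sum fun i _ => hterm i
        _ = Bb := by
            rw [hBb_def, ← Finset.mul_sum]
            congr 1
            rw [hSμ_def, hSγ_def, Finset.sum_add_distrib, Finset.sum_add_distrib,
              ← Finset.mul_sum, ← Finset.mul_sum, ← Finset.mul_sum]
    have hFle : F ≤ Fmax := by
      have h1 : Fb m μ δ x ≤ ((m:ℝ) + 2*m + 2*∑ i, |x i|)/(⨅ i, μ i) :=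
        Fb_ub hm hμ hδ0.le hδ1 x
      rw [← hμm_def] at h1
      rw [hF_def, hFmax_def]
      refine le_trans h1 ?_
      exact (div_le_div_iff_of_pos_right hμm).mpr (by linarith only [hin])
    have hpow_le : F^(p-1) ≤ Fmax^(p-1) :=
      Real.rpow_le_rpow hFx.le hFle hp1
    have hdrift_le : p * F^(p-1) * (∑ i, gd δ (x i) / μ i * drift m μ γ βt x u i)
        ≤ p * F^(p-1) * Bb :=
      mul_le_mul_of_nonneg_left hB_le (mul_nonneg hp0.le hFp1.le)
    have h5 : p * F^(p-1) * (A*δ^2 + Bb + δ*κ) ≤ p * Fmax^(p-1) * (A*δ^2 + Bb + δ*κ) :=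
      mul_le_mul_of_nonneg_right (mul_le_mul_of_nonneg_left hpow_le hp0.le) hABκ
    have hexp : p*F^(p-1)*(A*δ^2) + p*F^(p-1)*Bb + p*δ*κ*F^(p-1)
        = p*F^(p-1)*(A*δ^2 + Bb + δ*κ) := by ring
    linarith only [htrace, hdrift_le, h5, hexp, hC_def]
  · -- outside K
    have hxK : x ∉ {x : Fin m → ℝ | ∑ i, |x i| ≤ R} := by
      intro hxK
      have h9 : ∑ i, |x i| ≤ R := hxK
      linarith only [h9, hout]
    rw [Set.indicator_of_notMem hxK]
    have hBneg : (∑ i, drift m μ γ βt x u i * (gd δ (x i) / μ i)) ≤ -(κ*δ) - A*δ^2 := by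
      have houtPN : R < P + N := by rw [← habs_eq]; exact hout
      rcases le_or_gt N1 N with hN | hN
      · -- much negative mass
        have hs_le : max (∑ j, x j) 0 ≤ P := by
          rw [hsum_eq]
          exact max_le (by linarith) hP0
        have ht4 : δ * max (∑ j, x j) 0 ≤ δ * P := mul_le_mul_of_nonneg_left hs_le hδ0.le
        have ht5 : 0 ≤ (βt/(m:ℝ))*δ*(∑ i, psi' (δ * x i)) :=
          mul_nonneg (mul_nonneg (div_nonneg hβ.le hmp.le) hδ0.le) hψpos
        have hδ2N : δ^2*N1 ≤ δ^2*N := mul_le_mul_of_nonneg_left hN hδsq.le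
        have hN1eq : δ^2 * N1 = 4*(m:ℝ)/9 + κ*δ + J*δ^2 := by
          rw [hN1_def, mul_comm, div_mul_cancel₀ _ hδsq.ne']
        have hJd2 : J*δ^2 = (βt + m + A + 1)*δ^2 := by rw [hJ_def]
        linarith only [hmaster, hMle1, ht4, ht5, hδ2N, hN1eq, hJd2, hδsq.le]
      · -- much positive mass
        have hN1m : (m:ℝ) ≤ N1 := by
          rw [hN1_def, le_div_iff₀ hδsq]
          have h1 : δ * δ ≤ (1/2) * (1/2) :=
            mul_le_mul hδhalf hδhalf hδ0.le (by norm_num)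
          have h2 : 0 ≤ κ*δ := mul_nonneg hκ.le hδ0.le
          have h3 : 0 ≤ J*δ^2 := mul_nonneg hJ.le hδsq.le
          have h4 : (m:ℝ)*δ^2 ≤ (m:ℝ)*(1/4) := by
            refine mul_le_mul_of_nonneg_left ?_ hmp.le
            calc δ^2 = δ*δ := sq δ
              _ ≤ 1/4 := by linarith only [h1]
          linarith only [h2, h3, h4, hmp]
        have hPb : N1 + 1 < P := by rw [hR_def] at houtPN; linarith only [houtPN, hN]
        have hNP : N < P := by linarith only [hPb, hN]
        have hsx : max (∑ j, x j) 0 = P - N := by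
          rw [hsum_eq]
          exact max_eq_left (by linarith only [hNP])
        obtain ⟨i0, _, hi0⟩ : ∃ i ∈ Finset.univ, P/(m:ℝ) ≤ max (x i) 0 := by
          haveI : Nonempty (Fin m) := Fin.pos_iff_nonempty.mp hm
          apply Finset.exists_le_of_sum_le (Finset.univ_nonempty)
          rw [Finset.sum_const, Finset.card_univ, Fintype.card_fin, nsmul_eq_mul,
            mul_div_cancel₀ _ (ne_of_gt hmp), hP_def]
        have hx1 : 1 ≤ x i0 := by
          by_contra hcon
          push_neg at hcon
          have h1 : max (x i0) 0 ≤ 1 := max_le hcon.le zero_le_one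
          have h2 : 1 < P/(m:ℝ) := by
            rw [lt_div_iff₀ hmp]
            linarith only [hPb, hN1m]
          linarith only [h1, h2, hi0]
        have hψ1 : (1:ℝ) ≤ ∑ i, psi' (δ * x i) := by
          have he : psi' (δ * x i0) = 1 :=
            psi'_of_nonneg (mul_nonneg hδ0.le (by linarith only [hx1]))
          calc (1:ℝ) = psi' (δ * x i0) := he.symm
            _ ≤ ∑ i, psi' (δ * x i) :=
              Finset.single_le_sum (f := fun i => psi' (δ * x i))
                (fun i _ => psi'_nonneg _) (Finset.mem_univ i0)
        have ht1 : (βt/(m:ℝ))*δ*1 ≤ (βt/(m:ℝ))*δ*(∑ i, psi' (δ * x i)) :=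
          mul_le_mul_of_nonneg_left hψ1
            (mul_nonneg (div_nonneg hβ.le hmp.le) hδ0.le)
        have hkey : J * δ^2 ≤ (βt/(4*(m:ℝ)))*δ := by
          have h1 : δ * J ≤ (βt/(4*m*J)) * J := mul_le_mul_of_nonneg_right hδJ hJ.le
          have h2 : (βt/(4*(m:ℝ)*J)) * J = βt/(4*m) := by
            field_simp
          rw [h2] at h1
          calc J * δ^2 = (δ * J) * δ := by ring
            _ ≤ (βt/(4*m)) * δ := mul_le_mul_of_nonneg_right h1 hδ0.le
        have hκeq2 : (βt/(m:ℝ))*δ - κ*δ = (βt/(4*(m:ℝ)))*δ := by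
          rw [hκ_def]; field_simp; ring
        have hsx2 : δ * max (∑ i, x i) 0 = δ*P - δ*N := by rw [hsx]; ring
        have hJd2 : J*δ^2 = (βt + m + A + 1)*δ^2 := by rw [hJ_def]
        have hδ2N : 0 ≤ δ^2*N := mul_nonneg hδsq.le hN0
        linarith only [hmaster, hMle2, ht1, hsx2, hδ2N, hkey, hκeq2, hJd2, hδsq.le]
    have hPF : 0 ≤ p * F^(p-1) := mul_nonneg hp0.le hFp1.le
    have hdrift_le : p * F^(p-1) * (∑ i, gd δ (x i) / μ i * drift m μ γ βt x u i)
        ≤ p * F^(p-1) * (-(κ*δ) - A*δ^2) := by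
      apply mul_le_mul_of_nonneg_left _ hPF
      rw [hdriftsum]
      exact hBneg
    have hexp2 : p*F^(p-1)*(A*δ^2) + p*F^(p-1)*(-(κ*δ) - A*δ^2) = -(p*δ*κ*F^(p-1)) := by
      ring
    linarith only [htrace, hdrift_le, hexp2]

end
end

section
/- Let R > 0 and let h: ℝ^m → ℝ^m be Lipschitz with constant κ_R on the closed ball B_R of radius R centered at 0. Let u, u_n: [0,1] → ℝ^m be continuous, let r', r'_n: [0,1] → [0,∞) be integrable with r'_n bounded, and suppose u_y and u_{y_n} are continuous functions from [0,1] to ℝ^m satisfying u_y(s) = u(s) + ∫₀^s h(u_y(w)) r'(w) dw and u_{y_n}(s) = u_n(s) + ∫₀^s h(u_{y_n}(w)) r'_n(w) dw for all s ∈ [0,1], with sup_{s}|u_y(s)| ≤ R and sup_{s}|u_{y_n}(s)| ≤ R. Then sup_{s ∈ [0,1]} |u_{y_n}(s) - u_y(s)| ≤ (sup_{s ∈ [0,1]} |u_n(s) - u(s)| + (∫₀¹ |r'_n(w) - r'(w)| dw) · sup_{z ∈ B_R} |h(z)|) · e^{κ_R sup_{w ∈ [0,1]} r'_n(w)}. 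-/
open MeasureTheory

noncomputable section


private lemma aux_le_biSup {β : Type*} {f : β → ℝ} {s : Set β} (H : BddAbove (f '' s))
    {c : β} (hc : c ∈ s) : f c ≤ ⨆ i ∈ s, f i := by
  obtain ⟨B, hB⟩ := H
  have hub : ∀ i, (⨆ _ : i ∈ s, f i) ≤ max B 0 := by
    intro i
    by_cases hi : i ∈ s
    · rw [ciSup_pos hi]
      exact le_max_of_le_left (hB (Set.mem_image_of_mem f hi))
    · haveI : IsEmpty (i ∈ s) := ⟨hi⟩
      rw [Real.iSup_of_isEmpty]
      exact le_max_right _ _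
  have hbdd : BddAbove (Set.range fun i => ⨆ _ : i ∈ s, f i) :=
    ⟨max B 0, by rintro x ⟨i, rfl⟩; exact hub i⟩
  calc f c = ⨆ _ : c ∈ s, f c := (ciSup_pos (f := fun _ => f c) hc).symm
    _ ≤ ⨆ i ∈ s, f i := le_ciSup hbdd c

/-- Gronwall comparison estimate from the proof of Lemma 4: if `h` is Lipschitz
with constant `κ_R` on the closed ball `B_R`, `u_y` and `u_{y_n}` solve the
respective integral equations and stay in `B_R`, then
`sup_s |u_{y_n}(s) - u_y(s)| ≤ (sup_s |u_n(s) - u(s)| + ‖r'_n - r'‖_{L¹} · sup_{B_R} |h|) · e^{κ_R ‖r'_n‖_∞}`. -/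
theorem stmt_18 (m : ℕ) (R : ℝ) (hR : 0 < R) (κR : ℝ) (hκ : 0 ≤ κR)
    (h : EuclideanSpace ℝ (Fin m) → EuclideanSpace ℝ (Fin m))
    (hLip : ∀ z₁ ∈ Metric.closedBall (0 : EuclideanSpace ℝ (Fin m)) R,
      ∀ z₂ ∈ Metric.closedBall (0 : EuclideanSpace ℝ (Fin m)) R,
        ‖h z₁ - h z₂‖ ≤ κR * ‖z₁ - z₂‖)
    (u un uy uyn : ℝ → EuclideanSpace ℝ (Fin m))
    (hu : ContinuousOn u (Set.Icc 0 1)) (hun : ContinuousOn un (Set.Icc 0 1))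
    (huy : ContinuousOn uy (Set.Icc 0 1)) (huyn : ContinuousOn uyn (Set.Icc 0 1))
    (r' r'n : ℝ → ℝ)
    (hr0 : ∀ w ∈ Set.Icc (0 : ℝ) 1, 0 ≤ r' w)
    (hrn0 : ∀ w ∈ Set.Icc (0 : ℝ) 1, 0 ≤ r'n w)
    (hrint : IntegrableOn r' (Set.Icc 0 1))
    (hrnint : IntegrableOn r'n (Set.Icc 0 1))
    (hrnbdd : ∃ B : ℝ, ∀ w ∈ Set.Icc (0 : ℝ) 1, r'n w ≤ B)
    (heq : ∀ s ∈ Set.Icc (0 : ℝ) 1,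
      uy s = u s + ∫ w in Set.Icc (0 : ℝ) s, r' w • h (uy w))
    (heqn : ∀ s ∈ Set.Icc (0 : ℝ) 1,
      uyn s = un s + ∫ w in Set.Icc (0 : ℝ) s, r'n w • h (uyn w))
    (hinR : ∀ s ∈ Set.Icc (0 : ℝ) 1, ‖uy s‖ ≤ R)
    (hinRn : ∀ s ∈ Set.Icc (0 : ℝ) 1, ‖uyn s‖ ≤ R) :
    ∀ s ∈ Set.Icc (0 : ℝ) 1,
      ‖uyn s - uy s‖ ≤
        ((⨆ t ∈ Set.Icc (0 : ℝ) 1, ‖un t - u t‖) +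
            (∫ w in Set.Icc (0 : ℝ) 1, |r'n w - r' w|) *
              ⨆ z ∈ Metric.closedBall (0 : EuclideanSpace ℝ (Fin m)) R, ‖h z‖) *
          Real.exp (κR * ⨆ w ∈ Set.Icc (0 : ℝ) 1, r'n w) := by
  set BR := Metric.closedBall (0 : EuclideanSpace ℝ (Fin m)) R with hBR
  set M := ⨆ z ∈ BR, ‖h z‖ with hMdef
  set A1 := ⨆ t ∈ Set.Icc (0 : ℝ) 1, ‖un t - u t‖ with hA1def
  set Bn := ⨆ w ∈ Set.Icc (0 : ℝ) 1, r'n w with hBndef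
  set Irr := ∫ w in Set.Icc (0 : ℝ) 1, |r'n w - r' w| with hIrrdef
  set C := κR * Bn with hCdef
  set A := A1 + Irr * M with hAdef
  set φ := fun w => ‖uyn w - uy w‖ with hφdef
  -- basic membership in ball
  have hmemy : ∀ w ∈ Set.Icc (0 : ℝ) 1, uy w ∈ BR := fun w hw => by
    simpa [hBR, Metric.mem_closedBall, dist_eq_norm] using hinR w hw
  have hmemyn : ∀ w ∈ Set.Icc (0 : ℝ) 1, uyn w ∈ BR := fun w hw => by
    simpa [hBR, Metric.mem_closedBall, dist_eq_norm] using hinRn w hw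
  -- bound on h over the ball
  have hMbdd : BddAbove ((fun z => ‖h z‖) '' BR) := by
    refine ⟨‖h 0‖ + κR * R, ?_⟩
    rintro x ⟨z, hz, rfl⟩
    have h0 : (0 : EuclideanSpace ℝ (Fin m)) ∈ BR := by
      simp [hBR, hR.le]
    have := hLip z hz 0 h0
    have h2 : ‖h z‖ ≤ ‖h 0‖ + ‖h z - h 0‖ := by
      have := norm_add_le (h 0) (h z - h 0); simpa using this
    have h3 : ‖z - 0‖ ≤ R := by simpa [hBR, Metric.mem_closedBall, dist_eq_norm] using hz
    have h4 : κR * ‖z - 0‖ ≤ κR * R := mul_le_mul_of_nonneg_left h3 hκ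
    linarith
  have hM : ∀ z ∈ BR, ‖h z‖ ≤ M := fun z hz => aux_le_biSup hMbdd hz
  have hM0 : 0 ≤ M := le_trans (norm_nonneg _) (hM 0 (by simp [hBR, hR.le]))
  -- bound on ‖un - u‖
  have hA1bdd : BddAbove ((fun t => ‖un t - u t‖) '' Set.Icc (0 : ℝ) 1) :=
    isCompact_Icc.bddAbove_image ((hun.sub hu).norm)
  have hA1 : ∀ t ∈ Set.Icc (0 : ℝ) 1, ‖un t - u t‖ ≤ A1 := fun t ht =>
    aux_le_biSup hA1bdd ht
  have hA10 : 0 ≤ A1 :=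
    le_trans (norm_nonneg _) (hA1 0 (by norm_num))
  -- bound on r'n
  obtain ⟨B, hB⟩ := hrnbdd
  have hBnbdd : BddAbove (r'n '' Set.Icc (0 : ℝ) 1) := by
    refine ⟨B, ?_⟩; rintro x ⟨w, hw, rfl⟩; exact hB w hw
  have hBn : ∀ w ∈ Set.Icc (0 : ℝ) 1, r'n w ≤ Bn := fun w hw =>
    aux_le_biSup hBnbdd hw
  have hBn0 : 0 ≤ Bn := le_trans (hrn0 0 (by norm_num)) (hBn 0 (by norm_num))
  have hC0 : 0 ≤ C := mul_nonneg hκ hBn0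
  have hIrr0 : 0 ≤ Irr :=
    setIntegral_nonneg measurableSet_Icc fun w _ => abs_nonneg _
  have hA0 : 0 ≤ A := add_nonneg hA10 (mul_nonneg hIrr0 hM0)
  -- continuity of h on the ball, and of compositions
  have hLipOn : LipschitzOnWith κR.toNNReal h BR := by
    refine LipschitzOnWith.of_dist_le_mul fun x hx y hy => ?_
    rw [dist_eq_norm, dist_eq_norm]
    simpa [Real.coe_toNNReal κR hκ] using hLip x hx y hy
  have hhy : ContinuousOn (fun w => h (uy w)) (Set.Icc (0 : ℝ) 1) :=
    hLipOn.continuousOn.comp huy hmemy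
  have hhyn : ContinuousOn (fun w => h (uyn w)) (Set.Icc (0 : ℝ) 1) :=
    hLipOn.continuousOn.comp huyn hmemyn
  -- integrability of the integrands on Icc 0 1
  have hig : IntegrableOn (fun w => r' w • h (uy w)) (Set.Icc (0 : ℝ) 1) := by
    refine Integrable.mono' ((hrint.abs).mul_const M)
      (hrint.aestronglyMeasurable.smul (hhy.aestronglyMeasurable measurableSet_Icc)) ?_
    filter_upwards [ae_restrict_mem measurableSet_Icc] with w hw
    rw [norm_smul, Real.norm_eq_abs]
    exact mul_le_mul_of_nonneg_left (hM _ (hmemy w hw)) (abs_nonneg _)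
  have hign : IntegrableOn (fun w => r'n w • h (uyn w)) (Set.Icc (0 : ℝ) 1) := by
    refine Integrable.mono' ((hrnint.abs).mul_const M)
      (hrnint.aestronglyMeasurable.smul (hhyn.aestronglyMeasurable measurableSet_Icc)) ?_
    filter_upwards [ae_restrict_mem measurableSet_Icc] with w hw
    rw [norm_smul, Real.norm_eq_abs]
    exact mul_le_mul_of_nonneg_left (hM _ (hmemyn w hw)) (abs_nonneg _)
  have hφc : ContinuousOn φ (Set.Icc (0 : ℝ) 1) := (huyn.sub huy).norm
  have hφint : IntegrableOn φ (Set.Icc (0 : ℝ) 1) :=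
    hφc.integrableOn_compact isCompact_Icc
  have hφ0 : ∀ w, 0 ≤ φ w := fun w => norm_nonneg _
  have hrr : IntegrableOn (fun w => |r'n w - r' w|) (Set.Icc (0 : ℝ) 1) :=
    (hrnint.sub hrint).abs
  have hrrM : IntegrableOn (fun w => |r'n w - r' w| * M) (Set.Icc (0 : ℝ) 1) :=
    hrr.mul_const M
  -- the key integral inequality
  have key : ∀ s ∈ Set.Icc (0 : ℝ) 1, φ s ≤ A + C * ∫ w in Set.Icc (0 : ℝ) s, φ w := by
    intro s hs
    have hsub : Set.Icc (0 : ℝ) s ⊆ Set.Icc (0 : ℝ) 1 := Set.Icc_subset_Icc_right hs.2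
    have e1 : uyn s - uy s = (un s - u s) +
        ∫ w in Set.Icc (0 : ℝ) s,
          (r'n w • h (uyn w) - r' w • h (uy w)) := by
      rw [heqn s hs, heq s hs,
        integral_sub (hign.mono_set hsub) (hig.mono_set hsub)]
      abel
    have e2 : ‖uyn s - uy s‖ ≤ ‖un s - u s‖ +
        ∫ w in Set.Icc (0 : ℝ) s,
          ‖r'n w • h (uyn w) - r' w • h (uy w)‖ := by
      rw [e1]
      exact le_trans (norm_add_le _ _)
        (add_le_add_right (norm_integral_le_integral_norm _) _)
    have e3 : ∫ w in Set.Icc (0 : ℝ) s, ‖r'n w • h (uyn w) - r' w • h (uy w)‖ ≤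
        ∫ w in Set.Icc (0 : ℝ) s, (C * φ w + |r'n w - r' w| * M) := by
      refine setIntegral_mono_on
        (((hign.mono_set hsub).sub (hig.mono_set hsub)).norm)
        (((hφint.mono_set hsub).const_mul C).add
          (hrrM.mono_set hsub))
        measurableSet_Icc ?_
      intro w hw
      have hw1 : w ∈ Set.Icc (0 : ℝ) 1 := hsub hw
      have hid : r'n w • h (uyn w) - r' w • h (uy w) =
          r'n w • (h (uyn w) - h (uy w)) + (r'n w - r' w) • h (uy w) := by
        rw [smul_sub, sub_smul]; abel
      rw [hid]
      refine le_trans (norm_add_le _ _) ?_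
      rw [norm_smul, norm_smul, Real.norm_eq_abs, Real.norm_eq_abs]
      have t1 : |r'n w| * ‖h (uyn w) - h (uy w)‖ ≤ C * φ w := by
        have hnn := hrn0 w hw1
        have h1 : ‖h (uyn w) - h (uy w)‖ ≤ κR * φ w :=
          hLip _ (hmemyn w hw1) _ (hmemy w hw1)
        calc |r'n w| * ‖h (uyn w) - h (uy w)‖
            ≤ Bn * (κR * φ w) := by
              rw [abs_of_nonneg hnn]
              exact mul_le_mul (hBn w hw1) h1 (norm_nonneg _) hBn0
          _ = C * φ w := by ring
      have t2 : |r'n w - r' w| * ‖h (uy w)‖ ≤ |r'n w - r' w| * M :=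
        mul_le_mul_of_nonneg_left (hM _ (hmemy w hw1)) (abs_nonneg _)
      linarith
    have e4 : ∫ w in Set.Icc (0 : ℝ) s, (C * φ w + |r'n w - r' w| * M) =
        C * (∫ w in Set.Icc (0 : ℝ) s, φ w) +
          (∫ w in Set.Icc (0 : ℝ) s, |r'n w - r' w|) * M := by
      rw [integral_add ((hφint.mono_set hsub).const_mul C)
        (hrrM.mono_set hsub),
        integral_const_mul, integral_mul_const]
    have e5 : (∫ w in Set.Icc (0 : ℝ) s, |r'n w - r' w|) ≤ Irr := by
      refine setIntegral_mono_set hrr ?_ (HasSubset.Subset.eventuallyLE hsub)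
      filter_upwards with w using abs_nonneg _
    have e6 : (∫ w in Set.Icc (0 : ℝ) s, |r'n w - r' w|) * M ≤ Irr * M :=
      mul_le_mul_of_nonneg_right e5 hM0
    have := hA1 s hs
    calc φ s ≤ ‖un s - u s‖ + ∫ w in Set.Icc (0 : ℝ) s,
          ‖r'n w • h (uyn w) - r' w • h (uy w)‖ := e2
      _ ≤ A1 + (C * (∫ w in Set.Icc (0 : ℝ) s, φ w) + Irr * M) := by
          rw [e4] at e3
          exact add_le_add this (le_trans e3 (add_le_add_right e6 _))
      _ = A + C * ∫ w in Set.Icc (0 : ℝ) s, φ w := by rw [hAdef]; ring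
  -- the comparison function ψ
  set ψ : ℝ → ℝ := fun t => A + C * ∫ w in Set.Icc (0 : ℝ) t, φ w with hψdef
  have hψcont : ContinuousOn ψ (Set.Icc (0 : ℝ) 1) :=
    continuousOn_const.add (continuousOn_const.mul (intervalIntegral.continuousOn_primitive_Icc hφint))
  have hIcc_eq : ∀ x : ℝ, 0 ≤ x → (∫ w in Set.Icc (0 : ℝ) x, φ w) = ∫ w in (0:ℝ)..x, φ w := by
    intro x hx
    rw [intervalIntegral.integral_of_le hx, integral_Icc_eq_integral_Ioc]
  have hψnonneg : ∀ t ∈ Set.Icc (0 : ℝ) 1, 0 ≤ ψ t := by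
    intro t ht
    have : 0 ≤ ∫ w in Set.Icc (0 : ℝ) t, φ w :=
      setIntegral_nonneg measurableSet_Icc fun w _ => hφ0 w
    have := mul_nonneg hC0 this
    simp only [hψdef]
    linarith
  have hφψ : ∀ t ∈ Set.Icc (0 : ℝ) 1, φ t ≤ ψ t := key
  have hderiv : ∀ t ∈ Set.Ico (0:ℝ) 1, HasDerivWithinAt ψ (C * φ t) (Set.Ici t) t := by
    intro t ht
    have hii : IntervalIntegrable φ volume 0 t :=
      (intervalIntegrable_iff_integrableOn_Icc_of_le ht.1).2
        (hφint.mono_set (Set.Icc_subset_Icc_right ht.2.le))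
    have hmeas : StronglyMeasurableAtFilter φ (nhdsWithin t (Set.Ioi t)) := by
      refine ⟨Set.Icc 0 1, ?_, hφint.aestronglyMeasurable⟩
      rw [mem_nhdsWithin]
      exact ⟨Set.Iio 1, isOpen_Iio, ht.2, fun x hx => ⟨le_trans ht.1 hx.2.le, hx.1.le⟩⟩
    have hcw : ContinuousWithinAt φ (Set.Ici t) t := by
      have h1 : ContinuousWithinAt φ (Set.Icc t 1) t :=
        (hφc t ⟨ht.1, ht.2.le⟩).mono (Set.Icc_subset_Icc_left ht.1)
      rwa [ContinuousWithinAt, nhdsWithin_Icc_eq_nhdsGE ht.2] at h1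
    have hd0 : HasDerivWithinAt (fun x => ∫ w in (0:ℝ)..x, φ w) (φ t) (Set.Ici t) t :=
      intervalIntegral.integral_hasDerivWithinAt_right (s := Set.Ici t) (t := Set.Ioi t) hii hmeas (hcw.mono Set.Ioi_subset_Ici_self)
    have hd1 : HasDerivWithinAt (fun x => ∫ w in Set.Icc (0:ℝ) x, φ w) (φ t)
        (Set.Ici t) t := by
      refine hd0.congr (fun x hx => hIcc_eq x (le_trans ht.1 hx)) (hIcc_eq t ht.1)
    simpa [hψdef] using (hd1.const_mul C).const_add A
  have hψ0 : ‖ψ 0‖ ≤ A := by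
    have : (∫ w in Set.Icc (0 : ℝ) (0:ℝ), φ w) = 0 := by
      rw [integral_Icc_eq_integral_Ioc]; simp
    simp only [hψdef, this, mul_zero, add_zero]
    rw [Real.norm_eq_abs, abs_of_nonneg hA0]
  have hbound : ∀ t ∈ Set.Ico (0:ℝ) 1, ‖C * φ t‖ ≤ C * ‖ψ t‖ + 0 := by
    intro t ht
    have ht' : t ∈ Set.Icc (0:ℝ) 1 := ⟨ht.1, ht.2.le⟩
    rw [Real.norm_eq_abs, abs_of_nonneg (mul_nonneg hC0 (hφ0 t)),
      Real.norm_eq_abs, abs_of_nonneg (hψnonneg t ht'), add_zero]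
    exact mul_le_mul_of_nonneg_left (hφψ t ht') hC0
  have hg := norm_le_gronwallBound_of_norm_deriv_right_le hψcont hderiv hψ0 hbound
  intro s hs
  have h1 : ‖ψ s‖ ≤ gronwallBound A C 0 (s - 0) := hg s hs
  rw [gronwallBound_ε0, Real.norm_eq_abs, abs_of_nonneg (hψnonneg s hs)] at h1
  have h2 : φ s ≤ A * Real.exp (C * (s - 0)) := le_trans (hφψ s hs) h1
  have h3 : A * Real.exp (C * (s - 0)) ≤ A * Real.exp C := by
    refine mul_le_mul_of_nonneg_left (Real.exp_le_exp.2 ?_) hA0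
    nlinarith [hs.1, hs.2, hC0]
  exact le_trans h2 (le_trans h3 (le_of_eq rfl))

end
end

section
/- Let h: ℝ^m → ℝ^m be locally Lipschitz and satisfy |h(z)| ≤ c(1 + |z|) for all z, with c > 0. Let u_n, u: [0,1] → ℝ^m be continuous with u_n → u uniformly on [0,1], and let r'_n, r': [0,1] → [0,∞) be measurable with sup_n sup_{w ∈ [0,1]} r'_n(w) < ∞, r' integrable, and ∫₀¹ |r'_n(w) - r'(w)| dw → 0 as n → ∞. Suppose u_y and u_{y_n} are continuous functions from [0,1] to ℝ^m satisfying u_y(s) = u(s) + ∫₀^s h(u_y(w)) r'(w) dw and u_{y_n}(s) = u_n(s) + ∫₀^s h(u_{y_n}(w)) r'_n(w) dw for all s ∈ [0,1] and all n. Then u_{y_n} → u_y uniformly on [0,1] as n → ∞. -/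
open MeasureTheory Filter

noncomputable section

section Aux
open Metric Set NNReal intervalIntegral


lemma lipschitz_on_compact_convex' {E F : Type*} [NormedAddCommGroup E] [NormedSpace ℝ E]
    [PseudoMetricSpace F] {f : E → F} (hf : LocallyLipschitz f) {s : Set E}
    (hs : IsCompact s) (hc : Convex ℝ s) :
    ∃ K : ℝ, 0 ≤ K ∧ ∀ x ∈ s, ∀ y ∈ s, dist (f x) (f y) ≤ K * dist x y := by
  rcases s.eq_empty_or_nonempty with rfl | ⟨z0, hz0⟩
  · exact ⟨0, le_refl _, fun x hx => absurd hx (notMem_empty x)⟩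
  have key : ∀ x : E, ∃ K : ℝ≥0, ∃ r : ℝ, 0 < r ∧ LipschitzOnWith K f (ball x r) := by
    intro x
    obtain ⟨K, t, ht, hK⟩ := hf x
    obtain ⟨r, hr, hball⟩ := Metric.mem_nhds_iff.1 ht
    exact ⟨K, r, hr, hK.mono hball⟩
  choose K r hr hK using key
  obtain ⟨b', hb's, hb'fin, hcov⟩ := hs.elim_finite_subcover_image
    (fun x _ => isOpen_ball (x := x) (ε := r x / 2))
    (fun z hz => mem_iUnion₂.2 ⟨z, hz, mem_ball_self (by linarith [hr z])⟩)
  have hb'ne : b'.Nonempty := by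
    rcases mem_iUnion₂.1 (hcov hz0) with ⟨x, hx, _⟩
    exact ⟨x, hx⟩
  set L : ℝ := ((hb'fin.toFinset.sup K : ℝ≥0) : ℝ) with hLdef
  have hL0 : 0 ≤ L := (hb'fin.toFinset.sup K).coe_nonneg
  set δ : ℝ := hb'fin.toFinset.inf' (by simpa using hb'ne) (fun x => r x / 2) with hδdef
  have hδ0 : 0 < δ := by
    rw [hδdef]
    apply Finset.lt_inf'_iff _ |>.2
    intro x _
    linarith [hr x]
  have claim1 : ∀ z ∈ s, ∀ w : E, dist z w < δ → dist (f z) (f w) ≤ L * dist z w := by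
    intro z hz w hw
    rcases mem_iUnion₂.1 (hcov hz) with ⟨x, hx, hzx⟩
    have hxb : x ∈ hb'fin.toFinset := hb'fin.mem_toFinset.2 hx
    have hδx : δ ≤ r x / 2 := Finset.inf'_le _ hxb
    have hz' : z ∈ ball x (r x) := by
      have := mem_ball.1 hzx
      exact mem_ball.2 (by linarith [hr x])
    have hw' : w ∈ ball x (r x) := by
      have h1 := mem_ball.1 hzx
      have : dist w x ≤ dist w z + dist z x := dist_triangle w z x
      rw [dist_comm w z] at this
      exact mem_ball.2 (by linarith)
    have := (lipschitzOnWith_iff_dist_le_mul.1 (hK x)) z hz' w hw'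
    refine this.trans ?_
    apply mul_le_mul_of_nonneg_right _ dist_nonneg
    exact_mod_cast Finset.le_sup (f := K) hxb
  refine ⟨L, hL0, fun x hx y hy => ?_⟩
  rcases eq_or_ne x y with rfl | hxy
  · simp
  have hdpos : 0 < dist x y := dist_pos.2 hxy
  set N : ℕ := ⌊dist x y / (δ / 2)⌋₊ + 1 with hNdef
  have hNpos : 0 < (N : ℝ) := by positivity
  have hstep : dist x y / N < δ := by
    rw [div_lt_iff₀ hNpos]
    have h1 : dist x y / (δ / 2) < (N : ℝ) := by
      rw [hNdef]; push_cast; exact Nat.lt_floor_add_one _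
    have := (div_lt_iff₀ (by linarith : (0:ℝ) < δ / 2)).1 h1
    nlinarith
  set z : ℕ → E := fun j => x + ((j : ℝ) / N) • (y - x) with hzdef
  have hz0' : z 0 = x := by simp [hzdef]
  have hzN : z N = y := by
    simp only [hzdef]
    rw [div_self (ne_of_gt hNpos), one_smul]
    abel
  have hzmem : ∀ j ≤ N, z j ∈ s := by
    intro j hj
    exact hc.add_smul_sub_mem hx hy ⟨by positivity,
      (div_le_one hNpos).2 (by exact_mod_cast hj)⟩
  have hzdist : ∀ j : ℕ, dist (z j) (z (j+1)) = dist x y / N := by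
    intro j
    rw [dist_eq_norm]
    have : z j - z (j + 1) = -((1 / (N:ℝ)) • (y - x)) := by
      simp only [hzdef]
      have : ((j:ℝ) / N) • (y - x) - (((j+1:ℕ) : ℝ) / N) • (y - x)
          = (((j:ℝ) / N) - (((j+1:ℕ):ℝ) / N)) • (y - x) := by rw [sub_smul]
      rw [add_sub_add_left_eq_sub, this]
      congr 1
      push_cast
      rw [← neg_smul]
      congr 1
      field_simp
      ring
    rw [this, norm_neg, norm_smul, dist_eq_norm, norm_sub_rev]
    have h1 : ‖(1 : ℝ) / (N:ℝ)‖ = 1 / (N:ℝ) := by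
      rw [Real.norm_eq_abs, abs_of_pos (by positivity)]
    rw [h1]
    ring
  calc dist (f x) (f y) = dist ((f ∘ z) 0) ((f ∘ z) N) := by simp [hz0', hzN]
    _ ≤ ∑ i ∈ Finset.range N, dist ((f ∘ z) i) ((f ∘ z) (i+1)) := dist_le_range_sum_dist _ _
    _ ≤ ∑ i ∈ Finset.range N, L * (dist x y / N) := by
        apply Finset.sum_le_sum
        intro i hi
        have hiN : i ≤ N := le_of_lt (Finset.mem_range.1 hi)
        have := claim1 (z i) (hzmem i hiN) (z (i+1)) (by rw [hzdist]; exact hstep)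
        simpa [hzdist i] using this
    _ = L * dist x y := by
        rw [Finset.sum_const, Finset.card_range, nsmul_eq_mul]
        field_simp


lemma gronwall_Icc' {f : ℝ → ℝ} (hf : ContinuousOn f (Set.Icc 0 1))
    {a L : ℝ} (ha : 0 ≤ a) (hL : 0 < L)
    (hle : ∀ s ∈ Set.Icc (0:ℝ) 1, f s ≤ a + L * ∫ w in Set.Icc (0:ℝ) s, f w) :
    ∀ s ∈ Set.Icc (0:ℝ) 1, f s ≤ a * Real.exp (L * s) := by
  -- convert to interval integrals
  have hIcc : ∀ s ∈ Set.Icc (0:ℝ) 1, (∫ w in Set.Icc (0:ℝ) s, f w) = ∫ w in (0:ℝ)..s, f w := by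
    intro s hs
    rw [intervalIntegral.integral_of_le hs.1, MeasureTheory.integral_Icc_eq_integral_Ioc]
  set F : ℝ → ℝ := fun s => ∫ w in (0:ℝ)..s, f w with hFdef
  have hle' : ∀ s ∈ Set.Icc (0:ℝ) 1, f s ≤ a + L * F s := by
    intro s hs; have := hle s hs; rwa [hIcc s hs] at this
  have hFcont : ContinuousOn F (Set.Icc 0 1) := by
    have : IntegrableOn f (uIcc (0:ℝ) 1) := by
      rw [uIcc_of_le zero_le_one]
      exact hf.integrableOn_compact isCompact_Icc
    simpa [hFdef, uIcc_of_le (zero_le_one (α := ℝ))] using continuousOn_primitive_interval this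
  have hFderiv : ∀ x ∈ Set.Ioo (0:ℝ) 1, HasDerivAt F (f x) x := by
    intro x hx
    apply intervalIntegral.integral_hasDerivAt_right
    · exact (hf.mono (Icc_subset_Icc le_rfl hx.2.le)).intervalIntegrable_of_Icc hx.1.le
    · exact ContinuousOn.stronglyMeasurableAtFilter isOpen_Ioo (hf.mono Ioo_subset_Icc_self) x hx
    · exact (hf.mono Ioo_subset_Icc_self).continuousAt (isOpen_Ioo.mem_nhds hx)
  set φ : ℝ → ℝ := fun s => Real.exp (-L * s) * (a / L + F s) with hφdef
  have hφderiv : ∀ x ∈ Set.Ioo (0:ℝ) 1,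
      HasDerivAt φ (Real.exp (-L * x) * (f x - (a + L * F x))) x := by
    intro x hx
    have h1 : HasDerivAt (fun s => Real.exp (-L * s)) (-L * Real.exp (-L * x)) x := by
      have := (Real.hasDerivAt_exp (-L * x)).comp x ((hasDerivAt_id x).const_mul (-L))
      simp only [Function.comp_def, mul_one] at this
      have he : Real.exp (-L * x) * -L = -L * Real.exp (-L * x) := by ring
      rwa [he] at this
    have h2 : HasDerivAt (fun s => a / L + F s) (f x) x := (hFderiv x hx).const_add _
    have := h1.mul h2
    refine this.congr_deriv ?_
    have hLa : L * (a / L) = a := by field_simp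
    linear_combination (-Real.exp (-L * x)) * hLa
  have hanti : AntitoneOn φ (Set.Icc 0 1) := by
    apply antitoneOn_of_deriv_nonpos (convex_Icc 0 1)
    · exact (Real.continuous_exp.comp (continuous_const.mul continuous_id)).continuousOn.mul
        (continuousOn_const.add hFcont)
    · intro x hx
      rw [interior_Icc] at hx
      exact ((hφderiv x hx).differentiableAt).differentiableWithinAt
    · intro x hx
      rw [interior_Icc] at hx
      rw [(hφderiv x hx).deriv]
      have hfx := hle' x ⟨hx.1.le, hx.2.le⟩
      have : f x - (a + L * F x) ≤ 0 := by linarith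
      exact mul_nonpos_of_nonneg_of_nonpos (Real.exp_nonneg _) this
  intro s hs
  have hφs : φ s ≤ φ 0 := hanti (by simp) hs hs.1
  have hF0 : F 0 = 0 := by simp [hFdef]
  have hφ0 : φ 0 = a / L := by simp [hφdef, hF0]
  rw [hφ0, hφdef] at hφs
  simp only at hφs
  have hexp : (0:ℝ) < Real.exp (-L * s) := Real.exp_pos _
  have hFs : a / L + F s ≤ a / L * Real.exp (L * s) := by
    have h2 := mul_le_mul_of_nonneg_left hφs (Real.exp_pos (L*s)).le
    rw [← mul_assoc, ← Real.exp_add] at h2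
    simpa [mul_comm] using h2
  have : L * F s ≤ a * Real.exp (L * s) - a := by
    have h2 := mul_le_mul_of_nonneg_left hFs hL.le
    have hLa : L * (a / L) = a := by field_simp
    calc L * F s = L * (a / L + F s) - a := by rw [mul_add, hLa]; ring
      _ ≤ L * (a / L * Real.exp (L * s)) - a := by linarith
      _ = a * Real.exp (L * s) - a := by field_simp
  linarith [hle' s hs]

end Aux

set_option maxHeartbeats 2000000 in
/-- Core convergence assertion behind Lemma 4 (continuity of the integral mapping
in the `M₁` topology), stated in terms of parametric representations: if `h` is
locally Lipschitz with linear growth, `u_n → u` uniformly on `[0,1]`, the time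
derivatives `r'_n` are uniformly bounded with `∫₀¹ |r'_n - r'| → 0`, and `u_y`,
`u_{y_n}` solve the corresponding integral equations, then `u_{y_n} → u_y`
uniformly on `[0,1]`. -/
theorem stmt_19 (m : ℕ) (c : ℝ) (hc : 0 < c)
    (h : EuclideanSpace ℝ (Fin m) → EuclideanSpace ℝ (Fin m))
    (hloc : LocallyLipschitz h)
    (hh : ∀ z, ‖h z‖ ≤ c * (1 + ‖z‖))
    (un : ℕ → ℝ → EuclideanSpace ℝ (Fin m)) (u : ℝ → EuclideanSpace ℝ (Fin m))
    (hun : ∀ n, ContinuousOn (un n) (Set.Icc 0 1))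
    (hu : ContinuousOn u (Set.Icc 0 1))
    (huconv : TendstoUniformlyOn un u atTop (Set.Icc 0 1))
    (r'n : ℕ → ℝ → ℝ) (r' : ℝ → ℝ)
    (hrn0 : ∀ n, ∀ w ∈ Set.Icc (0 : ℝ) 1, 0 ≤ r'n n w)
    (hr0 : ∀ w ∈ Set.Icc (0 : ℝ) 1, 0 ≤ r' w)
    (hrnmeas : ∀ n, Measurable (r'n n))
    (hrnbdd : ∃ B : ℝ, ∀ n, ∀ w ∈ Set.Icc (0 : ℝ) 1, r'n n w ≤ B)
    (hrint : IntegrableOn r' (Set.Icc 0 1))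
    (hL1 : Tendsto (fun n => ∫ w in Set.Icc (0 : ℝ) 1, |r'n n w - r' w|)
      atTop (nhds 0))
    (uyn : ℕ → ℝ → EuclideanSpace ℝ (Fin m)) (uy : ℝ → EuclideanSpace ℝ (Fin m))
    (huyn : ∀ n, ContinuousOn (uyn n) (Set.Icc 0 1))
    (huy : ContinuousOn uy (Set.Icc 0 1))
    (heq : ∀ s ∈ Set.Icc (0 : ℝ) 1,
      uy s = u s + ∫ w in Set.Icc (0 : ℝ) s, r' w • h (uy w))
    (heqn : ∀ n, ∀ s ∈ Set.Icc (0 : ℝ) 1,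
      uyn n s = un n s + ∫ w in Set.Icc (0 : ℝ) s, r'n n w • h (uyn n w)) :
    TendstoUniformlyOn uyn uy atTop (Set.Icc 0 1) := by
  classical
  obtain ⟨B0, hB0⟩ := hrnbdd
  set B : ℝ := max B0 0 with hBdef
  have hB0' : (0:ℝ) ≤ B := le_max_right _ _
  have hB : ∀ n, ∀ w ∈ Set.Icc (0:ℝ) 1, r'n n w ≤ B :=
    fun n w hw => (hB0 n w hw).trans (le_max_left _ _)
  -- bounds for u and uy
  obtain ⟨Cu0, hCu0⟩ := isCompact_Icc.exists_bound_of_continuousOn hu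
  set Cu : ℝ := max Cu0 0 with hCudef
  have hCu : ∀ s ∈ Set.Icc (0:ℝ) 1, ‖u s‖ ≤ Cu := fun s hs => (hCu0 s hs).trans (le_max_left _ _)
  have hCu0' : (0:ℝ) ≤ Cu := le_max_right _ _
  obtain ⟨Ru0, hRu0⟩ := isCompact_Icc.exists_bound_of_continuousOn huy
  set Ru : ℝ := max Ru0 0 with hRudef
  have hRu : ∀ s ∈ Set.Icc (0:ℝ) 1, ‖uy s‖ ≤ Ru := fun s hs => (hRu0 s hs).trans (le_max_left _ _)
  have hRu0' : (0:ℝ) ≤ Ru := le_max_right _ _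
  -- uniform bound on uyn, given closeness of un to u
  set R1 : ℝ := (Cu + 1 + B * c) * Real.exp (B * c + 1) with hR1def
  have hR1nonneg : 0 ≤ R1 := by positivity
  have step1 : ∀ n, (∀ x ∈ Set.Icc (0:ℝ) 1, dist (u x) (un n x) < 1) →
      ∀ s ∈ Set.Icc (0:ℝ) 1, ‖uyn n s‖ ≤ R1 := by
    intro n hn1
    set g : ℝ → ℝ := fun s => ‖uyn n s‖ with hgdef
    have hgcont : ContinuousOn g (Set.Icc 0 1) := (huyn n).norm
    have hgle : ∀ s ∈ Set.Icc (0:ℝ) 1,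
        g s ≤ (Cu + 1 + B * c) + (B * c + 1) * ∫ w in Set.Icc (0:ℝ) s, g w := by
      intro s hs
      have hsub : Set.Icc (0:ℝ) s ⊆ Set.Icc (0:ℝ) 1 := Set.Icc_subset_Icc le_rfl hs.2
      have hint_g : IntegrableOn g (Set.Icc (0:ℝ) s) :=
        (hgcont.mono hsub).integrableOn_Icc
      have hgnonneg : (0:ℝ) ≤ ∫ w in Set.Icc (0:ℝ) s, g w :=
        setIntegral_nonneg measurableSet_Icc (fun w _ => norm_nonneg _)
      -- norm of the integral term
      have hnormint : ‖∫ w in Set.Icc (0:ℝ) s, r'n n w • h (uyn n w)‖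
          ≤ ∫ w in Set.Icc (0:ℝ) s, (B * c + B * c * g w) := by
        refine (norm_integral_le_integral_norm _).trans ?_
        apply integral_mono_of_nonneg
        · exact Filter.Eventually.of_forall (fun w => norm_nonneg _)
        · exact (integrable_const _).add ((hint_g.const_mul (B * c)))
        · filter_upwards [ae_restrict_mem measurableSet_Icc] with w hw
          have hw1 : w ∈ Set.Icc (0:ℝ) 1 := hsub hw
          have h1 : ‖r'n n w • h (uyn n w)‖ = r'n n w * ‖h (uyn n w)‖ := by
            rw [norm_smul, Real.norm_eq_abs, abs_of_nonneg (hrn0 n w hw1)]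
          rw [h1]
          have h2 : ‖h (uyn n w)‖ ≤ c * (1 + g w) := hh _
          have h3 : r'n n w * ‖h (uyn n w)‖ ≤ B * (c * (1 + g w)) :=
            mul_le_mul (hB n w hw1) h2 (norm_nonneg _) hB0'
          calc r'n n w * ‖h (uyn n w)‖ ≤ B * (c * (1 + g w)) := h3
            _ = B * c + B * c * g w := by ring
      have hval : (∫ w in Set.Icc (0:ℝ) s, (B * c + B * c * g w))
          = B * c * s + B * c * ∫ w in Set.Icc (0:ℝ) s, g w := by
        rw [integral_add (integrable_const _) (hint_g.const_mul (B * c)),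
          setIntegral_const, integral_const_mul]
        rw [Real.volume_real_Icc_of_le hs.1, smul_eq_mul]
        ring
      have hun_bd : ‖un n s‖ ≤ Cu + 1 := by
        have := hn1 s hs
        rw [dist_eq_norm] at this
        calc ‖un n s‖ = ‖u s - (u s - un n s)‖ := by rw [sub_sub_cancel]
          _ ≤ ‖u s‖ + ‖u s - un n s‖ := norm_sub_le _ _
          _ ≤ Cu + 1 := add_le_add (hCu s hs) this.le
      calc g s = ‖un n s + ∫ w in Set.Icc (0:ℝ) s, r'n n w • h (uyn n w)‖ := by
            rw [hgdef]; simp only; rw [heqn n s hs]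
        _ ≤ ‖un n s‖ + ‖∫ w in Set.Icc (0:ℝ) s, r'n n w • h (uyn n w)‖ := norm_add_le _ _
        _ ≤ (Cu + 1) + (B * c * s + B * c * ∫ w in Set.Icc (0:ℝ) s, g w) := by
            rw [← hval]; exact add_le_add hun_bd hnormint
        _ ≤ (Cu + 1 + B * c) + (B * c + 1) * ∫ w in Set.Icc (0:ℝ) s, g w := by
            have hBc : 0 ≤ B * c := mul_nonneg hB0' hc.le
            have hsle : B * c * s ≤ B * c := by nlinarith [hs.1, hs.2]
            nlinarith [hgnonneg]
    intro s hs
    have := gronwall_Icc' hgcont (by positivity) (by positivity) hgle s hs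
    refine this.trans ?_
    rw [hR1def]
    apply mul_le_mul_of_nonneg_left _ (by positivity)
    have hBc : 0 ≤ B * c := mul_nonneg hB0' hc.le
    exact Real.exp_le_exp.2 (by nlinarith [hs.1, hs.2])
  -- Step 2: Lipschitz constant on a large ball, and integrability facts
  set R : ℝ := max R1 Ru with hRdef
  have hR1R : R1 ≤ R := le_max_left _ _
  have hRuR : Ru ≤ R := le_max_right _ _
  obtain ⟨K, hK0, hKlip⟩ := lipschitz_on_compact_convex' hloc
    (isCompact_closedBall (0 : EuclideanSpace ℝ (Fin m)) R) (convex_closedBall _ R)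
  set M : ℝ := c * (1 + Ru) with hMdef
  have hM0 : 0 ≤ M := by positivity
  have hhM : ∀ w ∈ Set.Icc (0:ℝ) 1, ‖h (uy w)‖ ≤ M := by
    intro w hw
    refine (hh _).trans ?_
    have := hRu w hw
    rw [hMdef]
    nlinarith
  have hIn_nonneg : ∀ n, (0:ℝ) ≤ ∫ w in Set.Icc (0:ℝ) 1, |r'n n w - r' w| := fun n =>
    setIntegral_nonneg measurableSet_Icc (fun w _ => abs_nonneg _)
  have hBint : IntegrableOn (fun w => r' w • h (uy w)) (Set.Icc (0:ℝ) 1) := by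
    apply Integrable.mono' (hrint.norm.mul_const M)
    · exact hrint.aestronglyMeasurable.smul
        ((hloc.continuous.comp_continuousOn huy).aestronglyMeasurable measurableSet_Icc)
    · filter_upwards [ae_restrict_mem measurableSet_Icc] with w hw
      rw [norm_smul]
      exact mul_le_mul_of_nonneg_left (hhM w hw) (norm_nonneg _)
  have hAint : ∀ n, (∀ s ∈ Set.Icc (0:ℝ) 1, ‖uyn n s‖ ≤ R1) →
      IntegrableOn (fun w => r'n n w • h (uyn n w)) (Set.Icc (0:ℝ) 1) := by
    intro n hbd
    apply Integrable.mono' (integrable_const (B * (c * (1 + R1))))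
    · exact ((hrnmeas n).aestronglyMeasurable).smul
        ((hloc.continuous.comp_continuousOn (huyn n)).aestronglyMeasurable measurableSet_Icc)
    · filter_upwards [ae_restrict_mem measurableSet_Icc] with w hw
      rw [norm_smul, Real.norm_eq_abs, abs_of_nonneg (hrn0 n w hw)]
      have h2 : ‖h (uyn n w)‖ ≤ c * (1 + R1) := by
        refine (hh _).trans ?_
        nlinarith [hbd w hw]
      exact mul_le_mul (hB n w hw) h2 (norm_nonneg _) hB0'
  have hrnint : ∀ n, IntegrableOn (r'n n) (Set.Icc (0:ℝ) 1) := by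
    intro n
    apply Integrable.mono' (integrable_const B) ((hrnmeas n).aestronglyMeasurable)
    filter_upwards [ae_restrict_mem measurableSet_Icc] with w hw
    rw [Real.norm_eq_abs, abs_of_nonneg (hrn0 n w hw)]
    exact hB n w hw
  have hdiffint : ∀ n, IntegrableOn (fun w => |r'n n w - r' w|) (Set.Icc (0:ℝ) 1) := by
    intro n
    have := ((hrnint n).sub hrint).norm
    simpa [Real.norm_eq_abs, IntegrableOn] using this
  -- Step 3: main Gronwall estimate
  have step2 : ∀ n, (∀ x ∈ Set.Icc (0:ℝ) 1, dist (u x) (un n x) < 1) →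
      ∀ d : ℝ, 0 ≤ d → (∀ x ∈ Set.Icc (0:ℝ) 1, dist (u x) (un n x) ≤ d) →
      ∀ s ∈ Set.Icc (0:ℝ) 1, ‖uyn n s - uy s‖ ≤
        (d + M * ∫ w in Set.Icc (0:ℝ) 1, |r'n n w - r' w|) * Real.exp (B * K + 1) := by
    intro n hn1 d hd hnd
    have hbd := step1 n hn1
    set In : ℝ := ∫ w in Set.Icc (0:ℝ) 1, |r'n n w - r' w| with hIndef
    set g : ℝ → ℝ := fun s => ‖uyn n s - uy s‖ with hgdef
    have hgcont : ContinuousOn g (Set.Icc 0 1) := ((huyn n).sub huy).norm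
    have ha : 0 ≤ d + M * In := add_nonneg hd (mul_nonneg hM0 (hIn_nonneg n))
    have hgle : ∀ s ∈ Set.Icc (0:ℝ) 1,
        g s ≤ (d + M * In) + (B * K + 1) * ∫ w in Set.Icc (0:ℝ) s, g w := by
      intro s hs
      have hsub : Set.Icc (0:ℝ) s ⊆ Set.Icc (0:ℝ) 1 := Set.Icc_subset_Icc le_rfl hs.2
      have hint_g : IntegrableOn g (Set.Icc (0:ℝ) s) := (hgcont.mono hsub).integrableOn_Icc
      have hgnonneg : (0:ℝ) ≤ ∫ w in Set.Icc (0:ℝ) s, g w :=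
        setIntegral_nonneg measurableSet_Icc (fun w _ => norm_nonneg _)
      have hdecomp : uyn n s - uy s = (un n s - u s) +
          ∫ w in Set.Icc (0:ℝ) s, (r'n n w • h (uyn n w) - r' w • h (uy w)) := by
        rw [heqn n s hs, heq s hs,
          integral_sub ((hAint n hbd).mono_set hsub) (hBint.mono_set hsub)]
        abel
      have hmain : ‖∫ w in Set.Icc (0:ℝ) s, (r'n n w • h (uyn n w) - r' w • h (uy w))‖ ≤
          ∫ w in Set.Icc (0:ℝ) s, (B * K * g w + M * |r'n n w - r' w|) := by
        refine (norm_integral_le_integral_norm _).trans ?_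
        apply integral_mono_of_nonneg
        · exact Filter.Eventually.of_forall (fun w => norm_nonneg _)
        · exact (hint_g.const_mul (B*K)).add (((hdiffint n).mono_set hsub).const_mul M)
        · filter_upwards [ae_restrict_mem measurableSet_Icc] with w hw
          have hw1 : w ∈ Set.Icc (0:ℝ) 1 := hsub hw
          have hsplit : r'n n w • h (uyn n w) - r' w • h (uy w)
              = r'n n w • (h (uyn n w) - h (uy w)) + (r'n n w - r' w) • h (uy w) := by
            rw [smul_sub, sub_smul]; abel
          rw [hsplit]
          refine (norm_add_le _ _).trans ?_
          have h1 : ‖r'n n w • (h (uyn n w) - h (uy w))‖ ≤ B * (K * g w) := by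
            rw [norm_smul, Real.norm_eq_abs, abs_of_nonneg (hrn0 n w hw1)]
            refine mul_le_mul (hB n w hw1) ?_ (norm_nonneg _) hB0'
            have hm1 : uyn n w ∈ Metric.closedBall (0 : EuclideanSpace ℝ (Fin m)) R := by
              rw [Metric.mem_closedBall, dist_zero_right]
              exact (hbd w hw1).trans hR1R
            have hm2 : uy w ∈ Metric.closedBall (0 : EuclideanSpace ℝ (Fin m)) R := by
              rw [Metric.mem_closedBall, dist_zero_right]
              exact (hRu w hw1).trans hRuR
            have := hKlip (uyn n w) hm1 (uy w) hm2
            rw [dist_eq_norm, dist_eq_norm] at this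
            exact this
          have h2 : ‖(r'n n w - r' w) • h (uy w)‖ ≤ |r'n n w - r' w| * M := by
            rw [norm_smul, Real.norm_eq_abs]
            exact mul_le_mul_of_nonneg_left (hhM w hw1) (abs_nonneg _)
          calc ‖r'n n w • (h (uyn n w) - h (uy w))‖ + ‖(r'n n w - r' w) • h (uy w)‖
              ≤ B * (K * g w) + |r'n n w - r' w| * M := add_le_add h1 h2
            _ = B * K * g w + M * |r'n n w - r' w| := by ring
      have hval : (∫ w in Set.Icc (0:ℝ) s, (B * K * g w + M * |r'n n w - r' w|))
          = B * K * (∫ w in Set.Icc (0:ℝ) s, g w)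
            + M * ∫ w in Set.Icc (0:ℝ) s, |r'n n w - r' w| := by
        rw [integral_add (hint_g.const_mul (B*K)) (((hdiffint n).mono_set hsub).const_mul M),
          integral_const_mul, integral_const_mul]
      have hI2 : (∫ w in Set.Icc (0:ℝ) s, |r'n n w - r' w|) ≤ In := by
        apply setIntegral_mono_set (hdiffint n)
        · exact Filter.Eventually.of_forall (fun w => abs_nonneg _)
        · exact HasSubset.Subset.eventuallyLE hsub
      have hnorm_un : ‖un n s - u s‖ ≤ d := by
        rw [norm_sub_rev, ← dist_eq_norm]
        exact hnd s hs
      calc g s = ‖(un n s - u s) +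
            ∫ w in Set.Icc (0:ℝ) s, (r'n n w • h (uyn n w) - r' w • h (uy w))‖ := by
            rw [hgdef]; simp only; rw [hdecomp]
        _ ≤ ‖un n s - u s‖ +
            ‖∫ w in Set.Icc (0:ℝ) s, (r'n n w • h (uyn n w) - r' w • h (uy w))‖ :=
            norm_add_le _ _
        _ ≤ d + (B * K * (∫ w in Set.Icc (0:ℝ) s, g w) + M * In) := by
            refine add_le_add hnorm_un (hmain.trans ?_)
            rw [hval]
            exact add_le_add_right (mul_le_mul_of_nonneg_left hI2 hM0) _
        _ ≤ (d + M * In) + (B * K + 1) * ∫ w in Set.Icc (0:ℝ) s, g w := by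
            nlinarith [hgnonneg]
    intro s hs
    have := gronwall_Icc' hgcont ha (by positivity) hgle s hs
    refine this.trans ?_
    apply mul_le_mul_of_nonneg_left _ ha
    exact Real.exp_le_exp.2 (by nlinarith [hs.1, hs.2, mul_nonneg hB0' hK0])
  -- Step 4: conclusion
  rw [Metric.tendstoUniformlyOn_iff]
  intro ε hε
  set E0 : ℝ := Real.exp (B * K + 1) with hE0def
  have hE0pos : 0 < E0 := Real.exp_pos _
  set δ : ℝ := ε / (2 * (1 + M) * E0) with hδdef
  have h1M : (0:ℝ) < 1 + M := by linarith
  have hδpos : 0 < δ := by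
    rw [hδdef]
    positivity
  have h1 := Metric.tendstoUniformlyOn_iff.1 huconv 1 one_pos
  have h2 := Metric.tendstoUniformlyOn_iff.1 huconv δ hδpos
  have h3 := hL1.eventually_lt_const hδpos
  filter_upwards [h1, h2, h3] with n hn1 hn2 hn3 x hx
  have hest := step2 n hn1 δ hδpos.le (fun y hy => (hn2 y hy).le) x hx
  have hIn : (∫ w in Set.Icc (0:ℝ) 1, |r'n n w - r' w|) ≤ δ := hn3.le
  rw [dist_eq_norm, norm_sub_rev]
  have hfinal : (δ + M * ∫ w in Set.Icc (0:ℝ) 1, |r'n n w - r' w|) * E0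
      ≤ (δ + M * δ) * E0 := by
    apply mul_le_mul_of_nonneg_right _ hE0pos.le
    exact add_le_add_right (mul_le_mul_of_nonneg_left hIn hM0) _
  have heq2 : (δ + M * δ) * E0 = ε / 2 := by
    rw [hδdef]
    field_simp
  calc ‖uyn n x - uy x‖ ≤ (δ + M * ∫ w in Set.Icc (0:ℝ) 1, |r'n n w - r' w|) * E0 := hest
    _ ≤ (δ + M * δ) * E0 := hfinal
    _ = ε / 2 := heq2
    _ < ε := by linarith

end
end
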